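/- arXiv:1111.4988 — 9 statements merged into one kernel-verified Lean document; each statement's English description precedes it below -/
import Mathlib

section
/- Let p be an odd prime. For any integer k with 1 ≤ k ≤ p-1, we have k * binom(2k,k) * binom(2(p-k), p-k) ≡ (-1)^(⌊2k/p⌋ - 1) * 2p (mod p^2). -/
open Nat

private lemma sun_ascCast (p : ℕ) : ∀ n : ℕ, (((p+1).ascFactorial n : ℕ) : ZMod p) = (n ! : ZMod p)
  | 0 => by simp
  | n+1 => by
    rw [Nat.ascFactorial_succ, Nat.factorial_succ]
    push_cast [sun_ascCast p n]
    rw [ZMod.natCast_self]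
    ring

private lemma sun_wfac (p : ℕ) (hp : p.Prime) :
    ∀ j : ℕ, j ≤ p - 1 → ((p-1-j)! : ZMod p) * (j ! : ZMod p) = (-1)^(j+1)
  | 0, _ => by
    haveI : Fact p.Prime := ⟨hp⟩
    simpa using ZMod.wilsons_lemma p
  | j+1, h => by
    haveI : Fact p.Prime := ⟨hp⟩
    have hp2 : 2 ≤ p := hp.two_le
    have hj : j ≤ p - 1 := by omega
    have IH := sun_wfac p hp j hj
    have h2 : p - 1 - j = (p - 1 - (j+1)) + 1 := by omega
    rw [h2, Nat.factorial_succ] at IH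
    push_cast at IH
    have h3 : ((p - 1 - (j+1) : ℕ) : ZMod p) + 1 = -((j : ZMod p) + 1) := by
      have h4 : (p - 1 - (j+1)) + 1 = p - (j+1) := by omega
      have h5 : (((p - 1 - (j+1)) + 1 : ℕ) : ZMod p) = ((p - (j+1) : ℕ) : ZMod p) := by rw [h4]
      push_cast at h5
      rw [h5, Nat.cast_sub (by omega : j+1 ≤ p)]
      push_cast
      rw [ZMod.natCast_self]
      ring
    rw [h3] at IH
    rw [Nat.factorial_succ]
    push_cast
    linear_combination (-1 : ZMod p) * IH

private lemma sun_natN (k : ℕ) (hk : 1 ≤ k) :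
    k * (2*k)! * ((k-1)! * (k-1)!) = 2 * (k ! * k !) * (2*k-1)! := by
  obtain ⟨j, rfl⟩ := Nat.exists_eq_add_of_le hk
  have h1 : 2*(1+j) = (2*j+1)+1 := by ring
  have h2 : 2*(1+j)-1 = 2*j+1 := by omega
  have h3 : (1+j)-1 = j := by omega
  have h4 : (1+j)! = (1+j) * j ! := by rw [Nat.add_comm, Nat.factorial_succ]
  rw [h2, h3, h1, Nat.factorial_succ, h4]
  ring

private lemma sun_key (p k : ℕ) (hp : p.Prime) (hk1 : 1 ≤ k) (hk : 2*k < p) :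
    ((k : ℤ) * ((2 * k).choose k : ℤ) * ((2 * (p - k)).choose (p - k) : ℤ))
      ≡ -(2 * (p : ℤ)) [ZMOD (p : ℤ) ^ 2] := by
  haveI : Fact p.Prime := ⟨hp⟩
  have hkp : k < p := by omega
  set m := p - k with hm
  have hmp : m < p := by omega
  -- coprimality of the factorial factor
  have hpk : ¬ p ∣ (k ! * k ! * (m ! * m !)) := by
    intro hdvd
    rcases (Nat.Prime.dvd_mul hp).mp hdvd with h | h
    · rcases (Nat.Prime.dvd_mul hp).mp h with h' | h' <;>
        exact absurd ((Nat.Prime.dvd_factorial hp).mp h') (by omega)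
    · rcases (Nat.Prime.dvd_mul hp).mp h with h' | h' <;>
        exact absurd ((Nat.Prime.dvd_factorial hp).mp h') (by omega)
  have hgcd : Int.gcd ((p:ℤ)^2) ((k ! * k ! * (m ! * m !) : ℕ) : ℤ) = 1 := by
    rw [show ((p:ℤ)^2) = ((p^2 : ℕ) : ℤ) by push_cast; ring, Int.gcd_natCast_natCast]
    exact Nat.Coprime.pow_left 2 (hp.coprime_iff_not_dvd.mpr hpk)
  -- factorial identities
  have e1 : (2*k).choose k * (k ! * k !) = (2*k)! := by
    have h := Nat.choose_mul_factorial_mul_factorial (show k ≤ 2*k by omega)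
    rw [show 2*k - k = k by omega] at h
    rw [← h]; ring
  have e2 : (2*m).choose m * (m ! * m !) = (2*m)! := by
    have h := Nat.choose_mul_factorial_mul_factorial (show m ≤ 2*m by omega)
    rw [show 2*m - m = m by omega] at h
    rw [← h]; ring
  have e3 : (2*m)! = p * ((p-1)! * ((p+1).ascFactorial (p - 2*k))) := by
    have h4 := Nat.factorial_mul_ascFactorial p (p - 2*k)
    rw [show p + (p - 2*k) = 2*m by omega] at h4
    rw [← h4, ← Nat.mul_factorial_pred hp.pos.ne', Nat.mul_assoc]
  -- the inner congruence mod p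
  have inner : ((k : ℤ) * (((2*k)! : ℕ) : ℤ) * (((p-1)! * ((p+1).ascFactorial (p - 2*k)) : ℕ) : ℤ))
      ≡ (-(2:ℤ)) * ((k ! * k ! * (m ! * m !) : ℕ) : ℤ) [ZMOD (p:ℤ)] := by
    rw [← ZMod.intCast_eq_intCast_iff]
    push_cast
    rw [ZMod.wilsons_lemma, sun_ascCast]
    -- facts from Wilson-type lemma
    have E1 := sun_wfac p hp (2*k-1) (by omega)
    rw [show p - 1 - (2*k-1) = p - 2*k by omega, show 2*k-1+1 = 2*k by omega] at E1
    have hE1 : ((p-2*k)! : ZMod p) * ((2*k-1)! : ZMod p) = 1 := by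
      rw [E1, pow_mul]; norm_num
    have E2 := sun_wfac p hp (k-1) (by omega)
    rw [show p - 1 - (k-1) = m by omega, show k-1+1 = k by omega] at E2
    have hN := sun_natN k hk1
    have hNz : ((k : ZMod p)) * (((2*k)! : ℕ) : ZMod p) * ((((k-1)! : ℕ) : ZMod p) * (((k-1)! : ℕ) : ZMod p))
        = 2 * (((k ! : ℕ) : ZMod p) * ((k ! : ℕ) : ZMod p)) * (((2*k-1)! : ℕ) : ZMod p) := by
      exact_mod_cast congrArg (fun n : ℕ => (n : ZMod p)) hN
    have ha : (((2*k-1)! : ℕ) : ZMod p) ≠ 0 := by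
      intro h0
      have := (ZMod.natCast_eq_zero_iff _ _).mp h0
      exact absurd ((Nat.Prime.dvd_factorial hp).mp this) (by omega)
    have hb : (((k-1)! : ℕ) : ZMod p) ≠ 0 := by
      intro h0
      have := (ZMod.natCast_eq_zero_iff _ _).mp h0
      exact absurd ((Nat.Prime.dvd_factorial hp).mp this) (by omega)
    apply mul_right_cancel₀ (mul_ne_zero ha (mul_ne_zero hb hb))
    set s : ZMod p := (-1)^k with hsdef
    have hs : s * s = 1 := by
      rw [hsdef, ← pow_add, show k + k = 2*k by ring, pow_mul]; norm_num
    set A : ZMod p := (((p-2*k)! : ℕ) : ZMod p) with hA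
    set a : ZMod p := (((2*k-1)! : ℕ) : ZMod p) with ha'
    set B : ZMod p := ((m ! : ℕ) : ZMod p) with hB
    set b : ZMod p := (((k-1)! : ℕ) : ZMod p) with hb'
    linear_combination (-((k : ZMod p) * (((2*k)! : ℕ) : ZMod p) * b * b)) * hE1
      + (2 * ((k ! : ℕ) : ZMod p) * ((k ! : ℕ) : ZMod p) * a * (B*b + s)) * E2
      + (2 * ((k ! : ℕ) : ZMod p) * ((k ! : ℕ) : ZMod p) * a) * hs - hNz
  -- assemble mod p^2
  have hnat : k * ((2*k).choose k) * ((2*m).choose m) * (k ! * k ! * (m ! * m !))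
      = p * (k * (2*k)! * ((p-1)! * ((p+1).ascFactorial (p - 2*k)))) := by
    calc k * ((2*k).choose k) * ((2*m).choose m) * (k ! * k ! * (m ! * m !))
        = k * ((2*k).choose k * (k ! * k !)) * ((2*m).choose m * (m ! * m !)) := by ring
      _ = k * (2*k)! * (2*m)! := by rw [e1, e2]
      _ = p * (k * (2*k)! * ((p-1)! * ((p+1).ascFactorial (p - 2*k)))) := by rw [e3]; ring
  have G' : ((k : ℤ) * ((2 * k).choose k : ℤ) * ((2 * m).choose m : ℤ)) * ((k ! * k ! * (m ! * m !) : ℕ) : ℤ)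
      ≡ (-(2 * (p:ℤ))) * ((k ! * k ! * (m ! * m !) : ℕ) : ℤ) [ZMOD (p:ℤ)^2] := by
    have H := Int.ModEq.mul_left' (c := (p:ℤ)) inner
    rw [show (p:ℤ) * (p:ℤ) = (p:ℤ)^2 by ring] at H
    have hl : ((k : ℤ) * ((2 * k).choose k : ℤ) * ((2 * m).choose m : ℤ)) * ((k ! * k ! * (m ! * m !) : ℕ) : ℤ)
        = (p:ℤ) * ((k : ℤ) * (((2*k)! : ℕ) : ℤ) * (((p-1)! * ((p+1).ascFactorial (p - 2*k)) : ℕ) : ℤ)) := by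
      exact_mod_cast congrArg (fun n : ℕ => (n : ℤ)) hnat
    have hr : (-(2 * (p:ℤ))) * ((k ! * k ! * (m ! * m !) : ℕ) : ℤ)
        = (p:ℤ) * ((-(2:ℤ)) * ((k ! * k ! * (m ! * m !) : ℕ) : ℤ)) := by ring
    rw [hl, hr]
    exact H
  have hcancel := Int.ModEq.cancel_right_div_gcd (by exact_mod_cast pow_pos hp.pos 2 : (0:ℤ) < (p:ℤ)^2) G'
  rw [hgcd] at hcancel
  simpa using hcancel

/-- For an odd prime `p` and `1 ≤ k ≤ p-1`,
`k * C(2k,k) * C(2(p-k), p-k) ≡ (-1)^(⌊2k/p⌋ - 1) * 2 * p (mod p^2)`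
as a congruence between integers. -/
theorem sun_lemma_2_1 (p : ℕ) (hp : p.Prime) (hodd : Odd p) (k : ℕ)
    (hk1 : 1 ≤ k) (hk2 : k ≤ p - 1) :
    ((k : ℤ) * ((2 * k).choose k : ℤ) * ((2 * (p - k)).choose (p - k) : ℤ))
      ≡ (((2 * k / p : ℤ) - 1).negOnePow : ℤ) * 2 * (p : ℤ) [ZMOD (p : ℤ) ^ 2] := by
  have hp2 : 2 ≤ p := hp.two_le
  have hkp : k < p := by omega
  obtain ⟨t, ht⟩ := hodd
  rcases lt_trichotomy (2*k) p with hA | hE | hB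
  · -- 2k < p
    have hdiv : (2 * (k:ℤ)) / (p:ℤ) = 0 :=
      Int.ediv_eq_zero_of_lt (by positivity) (by exact_mod_cast hA)
    rw [hdiv]
    have h := sun_key p k hp hk1 hA
    rw [show ((0:ℤ) - 1) = -1 by ring, show ((-1:ℤ)) = -(1:ℤ) by ring,
      Int.negOnePow_neg, Int.negOnePow_one]
    calc ((k : ℤ) * ((2 * k).choose k : ℤ) * ((2 * (p - k)).choose (p - k) : ℤ))
        ≡ -(2 * (p:ℤ)) [ZMOD (p:ℤ)^2] := h
      _ = ((-1 : ℤˣ) : ℤ) * 2 * (p:ℤ) := by norm_num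
  · omega
  · -- p < 2k
    have hdiv : (2 * (k:ℤ)) / (p:ℤ) = 1 := by
      rw [show (2 * (k:ℤ)) = (2*(k:ℤ) - p) + (p:ℤ) * 1 by ring,
        Int.add_mul_ediv_left _ 1 (by exact_mod_cast hp.pos.ne' : (p:ℤ) ≠ 0)]
      rw [Int.ediv_eq_zero_of_lt (by push_cast; omega) (by push_cast; omega)]
      ring
    rw [hdiv, show ((1:ℤ) - 1) = 0 by ring, Int.negOnePow_zero]
    have hk' := sun_key p (p-k) hp (by omega) (by omega)
    rw [Nat.sub_sub_self hkp.le] at hk'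
    have hcast : ((p - k : ℕ) : ℤ) = (p:ℤ) - (k:ℤ) := by
      rw [Nat.cast_sub hkp.le]
    rw [hcast] at hk'
    -- p ∣ C(2k, k)
    have hpd : p ∣ (2*k).choose k := by
      have h := Nat.Prime.dvd_choose_add hp hkp hkp (by omega)
      rwa [show k + k = 2*k by ring] at h
    obtain ⟨c, hc⟩ := hpd
    have h0 : ((p:ℤ) * ((2 * (p - k)).choose (p - k) : ℤ) * ((2 * k).choose k : ℤ))
        ≡ 0 [ZMOD (p:ℤ)^2] := by
      have hd : ((p:ℤ)^2) ∣ ((p:ℤ) * ((2 * (p - k)).choose (p - k) : ℤ) * ((2 * k).choose k : ℤ)) := by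
        refine ⟨((2 * (p - k)).choose (p - k) : ℤ) * c, ?_⟩
        have hcc : (((2*k).choose k : ℕ) : ℤ) = (p:ℤ) * (c:ℤ) := by exact_mod_cast congrArg (fun n : ℕ => (n : ℤ)) hc
        rw [hcc]; ring
      exact Int.modEq_zero_iff_dvd.mpr hd
    have h2 := h0.sub hk'
    calc ((k : ℤ) * ((2 * k).choose k : ℤ) * ((2 * (p - k)).choose (p - k) : ℤ))
        = ((p:ℤ) * ((2 * (p - k)).choose (p - k) : ℤ) * ((2 * k).choose k : ℤ))
          - (((p:ℤ) - k) * ((2 * (p - k)).choose (p - k) : ℤ) * ((2 * k).choose k : ℤ)) := by ring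
      _ ≡ 0 - (-(2 * (p:ℤ))) [ZMOD (p:ℤ)^2] := h2
      _ = ((1 : ℤˣ) : ℤ) * 2 * (p:ℤ) := by simp
end

section
/- Let p = 2n+1 be an odd prime. For any integer k with 1 ≤ k ≤ p-1 (in particular for 1 ≤ k ≤ n), we have binom(n,k) * binom(n+k,k) ≡ binom(2k,k)^2 / (-16)^k (mod p^2). -/
lemma sun_key_s8 (n : ℕ) (hp : (2*n+1).Prime) (k : ℕ) (hk : k ≤ n) :
    ((2*n+1 : ℤ))^2 ∣ (-16)^k * (n.choose k : ℤ) * ((n+k).choose k : ℤ)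
      - (((2*k).choose k : ℤ))^2 := by
  induction k with
  | zero => simp
  | succ k ih =>
    have hk' : k ≤ n := by omega
    obtain ⟨m, hm⟩ := ih hk'
    have h1 : (n.choose (k+1) : ℤ) * (k+1) = (n.choose k : ℤ) * ((n:ℤ) - k) := by
      have := Nat.choose_succ_right_eq n k
      zify [hk'] at this
      exact this
    have h2 : ((n+k:ℤ)+1) * ((n+k).choose k : ℤ) = ((n+k+1).choose (k+1) : ℤ) * (k+1) := by
      exact_mod_cast congrArg (Nat.cast : ℕ → ℤ) (Nat.add_one_mul_choose_eq (n+k) k)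
    have h3 : ((k:ℤ)+1) * ((2*(k+1)).choose (k+1) : ℤ) = 2*(2*(k:ℤ)+1) * ((2*k).choose k : ℤ) := by
      exact_mod_cast congrArg (Nat.cast : ℕ → ℤ)
        (by simpa [Nat.centralBinom] using Nat.succ_mul_centralBinom_succ k)
    have hdvd : ((2*n+1:ℤ))^2 ∣ ((k:ℤ)+1)^2 *
        ((-16)^(k+1) * (n.choose (k+1) : ℤ) * ((n+(k+1)).choose (k+1) : ℤ)
          - (((2*(k+1)).choose (k+1) : ℤ))^2) := by
      refine ⟨4*(2*(k:ℤ)+1)^2 * m - 4 * ((-16)^k * (n.choose k : ℤ) * ((n+k).choose k : ℤ)), ?_⟩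
      have e1 : ((k:ℤ)+1)^2 * ((-16)^(k+1) * (n.choose (k+1) : ℤ) * ((n+(k+1)).choose (k+1) : ℤ))
          = (4*(2*(k:ℤ)+1)^2 - 4*(2*(n:ℤ)+1)^2) *
            ((-16)^k * (n.choose k : ℤ) * ((n+k).choose k : ℤ)) := by
        have : ((k:ℤ)+1)^2 * ((-16)^(k+1) * (n.choose (k+1) : ℤ) * ((n+(k+1)).choose (k+1) : ℤ))
            = (-16)^(k+1) * ((n.choose (k+1) : ℤ) * (k+1)) *
              (((n+(k+1)).choose (k+1) : ℤ) * (k+1)) := by ring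
        rw [this, h1]
        have h2' : ((n+(k+1)).choose (k+1) : ℤ) * (k+1) = ((n+k:ℤ)+1) * ((n+k).choose k : ℤ) := by
          rw [h2]; ring
        rw [h2']
        ring
      have e2 : ((k:ℤ)+1)^2 * (((2*(k+1)).choose (k+1) : ℤ))^2
          = 4*(2*(k:ℤ)+1)^2 * (((2*k).choose k : ℤ))^2 := by
        have : ((k:ℤ)+1)^2 * (((2*(k+1)).choose (k+1) : ℤ))^2
            = (((k:ℤ)+1) * ((2*(k+1)).choose (k+1) : ℤ))^2 := by ring
        rw [this, h3]; ring_nf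
      linear_combination e1 - e2 + 4*(2*(k:ℤ)+1)^2 * hm
    have hne : ¬ (2*n+1 : ℕ) ∣ (k+1) := fun h =>
      absurd (Nat.le_of_dvd (by omega) h) (by omega)
    have hc : Nat.Coprime (2*n+1) (k+1) := (Nat.Prime.coprime_iff_not_dvd hp).mpr hne
    have hcZ : IsCoprime ((2*n+1:ℤ)) ((k:ℤ)+1) := by
      exact_mod_cast Nat.isCoprime_iff_coprime.mpr hc
    exact (hcZ.pow).dvd_of_dvd_mul_left hdvd

lemma sun_int (p n : ℕ) (hp : p.Prime) (hpn : p = 2 * n + 1) (k : ℕ)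
    (hk1 : 1 ≤ k) (hk2 : k ≤ p - 1) :
    (p : ℤ)^2 ∣ (-16)^k * (n.choose k : ℤ) * ((n+k).choose k : ℤ)
      - (((2*k).choose k : ℤ))^2 := by
  subst hpn
  by_cases hkn : k ≤ n
  · exact_mod_cast sun_key_s8 n hp k hkn
  · -- k > n : C(n,k) = 0 and p ∣ C(2k,k)
    have h0 : n.choose k = 0 := Nat.choose_eq_zero_of_lt (by omega)
    obtain ⟨c, hc⟩ : (2*n+1) ∣ (2*k).choose k :=
      hp.dvd_choose (by omega) (by omega) (by omega)
    rw [h0, hc]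
    push_cast
    exact ⟨-(c^2), by ring⟩

/-- Let `p = 2n+1` be an odd prime. For `1 ≤ k ≤ p-1`,
`C(n,k) * C(n+k,k) ≡ C(2k,k)^2 / (-16)^k (mod p^2)`, where the congruence
between rationals means `p^2` divides the numerator of the difference
written in lowest terms. -/
theorem sun_lemma_2_1b (p n : ℕ) (hp : p.Prime) (hpn : p = 2 * n + 1) (k : ℕ)
    (hk1 : 1 ≤ k) (hk2 : k ≤ p - 1) :
    (p : ℤ) ^ 2 ∣
      (((n.choose k : ℚ) * ((n + k).choose k : ℚ))
        - ((2 * k).choose k : ℚ) ^ 2 / (-16 : ℚ) ^ k).num := by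
  set E : ℚ := ((n.choose k : ℚ) * ((n + k).choose k : ℚ))
        - ((2 * k).choose k : ℚ) ^ 2 / (-16 : ℚ) ^ k with hE
  set a : ℤ := (-16)^k * (n.choose k : ℤ) * ((n+k).choose k : ℤ)
      - (((2*k).choose k : ℤ))^2 with ha
  have hbne : ((-16 : ℚ))^k ≠ 0 := pow_ne_zero _ (by norm_num)
  have hEq : E = (a : ℚ) / ((-16 : ℚ))^k := by
    rw [hE, ha]
    push_cast
    field_simp
  have hden : ((E.den : ℚ)) ≠ 0 := Nat.cast_ne_zero.mpr E.den_nz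
  have hnd : (E.num : ℚ) / (E.den : ℚ) = (a : ℚ) / ((-16 : ℚ))^k := by
    rw [Rat.num_div_den]; exact hEq
  have hcross : (E.num : ℚ) * ((-16 : ℚ))^k = (a : ℚ) * (E.den : ℚ) :=
    (div_eq_div_iff hden hbne).mp hnd
  have hZ : E.num * (-16 : ℤ)^k = a * (E.den : ℤ) := by exact_mod_cast hcross
  have hpa : (p : ℤ)^2 ∣ a := sun_int p n hp hpn k hk1 hk2
  have hdvd : (p : ℤ)^2 ∣ E.num * (-16 : ℤ)^k := hZ ▸ hpa.mul_right _
  have hn1 : 1 ≤ n := by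
    rcases Nat.eq_zero_or_pos n with h | h
    · exfalso; rw [hpn, h] at hp; norm_num at hp
    · exact h
  have hodd : Odd p := ⟨n, by omega⟩
  have hc2 : Nat.Coprime p 2 := Nat.coprime_two_right.mpr hodd
  have hcZ : IsCoprime (p : ℤ) 2 := by exact_mod_cast Nat.isCoprime_iff_coprime.mpr hc2
  have h16 : IsCoprime (p : ℤ) (-16 : ℤ) := by
    have := (hcZ.pow_right (n := 4)).neg_right
    norm_num at this
    exact this
  exact (h16.pow).dvd_of_dvd_mul_right hdvd
end

section
/- For every positive integer n, the sum over k from 1 to n of binom(n,k)*binom(n+k,k)*((-1)^k/k)*(H_{n+k} - H_{n-k}) equals (5/2) times the sum over k from 1 to n of (-1)^k * binom(2k,k) / k^2, plus 2*H_n^{(2)}, where H_m = sum_{j=1}^m 1/j and H_m^{(2)} = sum_{j=1}^m 1/j^2. -/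
open Finset

def Hq (t : ℕ) : ℚ := ∑ j ∈ Finset.Icc 1 t, (1:ℚ)/(j:ℚ)

def Fq (n k : ℕ) : ℚ :=
  (n.choose k : ℚ) * ((n + k).choose k : ℚ) * ((-1 : ℚ) ^ k / (k : ℚ))
    * (Hq (n+k) - Hq (n-k))

def gq (m k : ℕ) : ℚ :=
  (-1:ℚ)^(k+1) * 2 * (k:ℚ)^2 / ((m:ℚ)^2*((m:ℚ)+(k:ℚ))) * (m.choose k : ℚ) * ((m+k).choose k : ℚ)

def phiq (m k : ℕ) : ℚ := gq m k * (Hq (m+k-1) - Hq (m-k)) - 2/(m:ℚ) * gq m k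

lemma Hq_succ (t : ℕ) : Hq (t+1) = Hq t + 1/((t:ℚ)+1) := by
  unfold Hq
  rw [Finset.sum_Icc_succ_top (by omega)]
  push_cast; ring

lemma tele (f : ℕ → ℚ) (m : ℕ) : ∑ k ∈ Icc 1 m, (f (k+1) - f k) = f (m+1) - f 1 := by
  induction m with
  | zero => simp
  | succ m ih => rw [Finset.sum_Icc_succ_top (by omega), ih]; ring

lemma R1 (n k : ℕ) (hk : k ≤ n) :
    ((n:ℚ)+1+k) * ((n.choose k : ℚ) * ((n+k).choose k : ℚ))
      = ((n:ℚ)+1-k) * (((n+1).choose k : ℚ) * (((n+1)+k).choose k : ℚ)) := by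
  have c1 : ((n.choose k : ℚ)) * ((n:ℚ)+1) = ((n+1).choose k : ℚ) * ((n:ℚ)+1-(k:ℚ)) := by
    have := Nat.choose_mul_succ_eq n k
    have hc : ((n.choose k * (n+1) : ℕ) : ℚ) = (((n+1).choose k * (n+1-k) : ℕ) : ℚ) := by
      exact congrArg (Nat.cast : ℕ → ℚ) this
    push_cast [Nat.cast_sub (by omega : k ≤ n+1)] at hc
    linarith [hc]
  have c2 : (((n+k).choose k : ℚ)) * ((n:ℚ)+(k:ℚ)+1) = (((n+k+1).choose k : ℚ)) * ((n:ℚ)+1) := by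
    have := Nat.choose_mul_succ_eq (n+k) k
    have hc : (((n+k).choose k * (n+k+1) : ℕ) : ℚ) = (((n+k+1).choose k * (n+k+1-k) : ℕ) : ℚ) := by
      exact congrArg (Nat.cast : ℕ → ℚ) this
    have h2 : n+k+1-k = n+1 := by omega
    rw [h2] at hc
    push_cast at hc
    linarith [hc]
  have hne : ((n:ℚ)+1) ≠ 0 := by positivity
  have key : (((n:ℚ)+1+k) * ((n.choose k : ℚ) * ((n+k).choose k : ℚ))) * ((n:ℚ)+1)
      = (((n:ℚ)+1-k) * (((n+1).choose k : ℚ) * (((n+1)+k).choose k : ℚ))) * ((n:ℚ)+1) := by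
    have h3 : ((n+1)+k).choose k = (n+k+1).choose k := by rw [Nat.add_right_comm]
    rw [h3]
    calc (((n:ℚ)+1+k) * ((n.choose k : ℚ) * ((n+k).choose k : ℚ))) * ((n:ℚ)+1)
        = ((n.choose k : ℚ) * ((n:ℚ)+1)) * (((n+k).choose k : ℚ) * ((n:ℚ)+(k:ℚ)+1)) := by ring
      _ = (((n+1).choose k : ℚ) * ((n:ℚ)+1-(k:ℚ))) * ((((n+k+1).choose k : ℚ)) * ((n:ℚ)+1)) := by
          rw [c1, c2]
      _ = (((n:ℚ)+1-k) * (((n+1).choose k : ℚ) * (((n+k+1)).choose k : ℚ))) * ((n:ℚ)+1) := by ring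
  exact mul_right_cancel₀ hne key

set_option maxHeartbeats 2000000 in
lemma point_lt (n k : ℕ) (hk1 : 1 ≤ k) (hk : k ≤ n) :
    Fq (n+1) k - Fq n k = phiq (n+1) (k+1) - phiq (n+1) k := by
  have h1 : (n+1)+k-1 = n+k := by omega
  have h2 : (n+1)-k = (n-k)+1 := by omega
  have h3 : (n+1)+(k+1)-1 = (n+k)+1 := by omega
  have h4 : (n+1)-(k+1) = n-k := by omega
  have h5 : (n+1)+(k+1) = (n+k+1)+1 := by omega
  unfold Fq phiq gq
  rw [h1, h2, h3, h4]
  have hH1 : Hq ((n+1)+k) = Hq (n+k) + 1/((n:ℚ)+(k:ℚ)+1) := by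
    rw [show (n+1)+k = (n+k)+1 from by omega, Hq_succ]; push_cast; ring
  rw [hH1, Hq_succ (n+k), Hq_succ (n-k)]
  -- relations
  have hkn : ((n - k : ℕ) : ℚ) = (n:ℚ) - (k:ℚ) := by
    push_cast [Nat.cast_sub hk]; ring
  have e1 : (n.choose k : ℚ) * ((n+k).choose k : ℚ)
      = ((n:ℚ)+1-k) * (((n+1).choose k : ℚ) * (((n+1)+k).choose k : ℚ)) / ((n:ℚ)+1+k) := by
    have hne : ((n:ℚ)+1+k) ≠ 0 := by positivity
    field_simp
    linarith [R1 n k hk]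
  have e2 : (((n+1).choose (k+1) : ℕ) : ℚ) = ((n+1).choose k : ℚ) * ((n:ℚ)+1-k) / ((k:ℚ)+1) := by
    have := Nat.choose_succ_right_eq (n+1) k
    have hc := congrArg (Nat.cast : ℕ → ℚ) this
    push_cast [Nat.cast_sub (by omega : k ≤ n+1)] at hc
    have hne : ((k:ℚ)+1) ≠ 0 := by positivity
    field_simp
    linarith [hc]
  have e3 : ((((n+1)+(k+1)).choose (k+1) : ℕ) : ℚ)
      = ((n:ℚ)+(k:ℚ)+2) * (((n+1)+k).choose k : ℚ) / ((k:ℚ)+1) := by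
    have := Nat.add_one_mul_choose_eq (n+1+k) k
    have hc := congrArg (Nat.cast : ℕ → ℚ) this
    push_cast at hc
    have hne : ((k:ℚ)+1) ≠ 0 := by positivity
    rw [h5, show n+k+1+1 = n+1+k+1 from by omega]
    field_simp
    push_cast
    linarith [hc]
  rw [e1, e2, e3, hkn]
  -- now pure algebra
  set X := Hq (n+k)
  set Y := Hq (n-k)
  set A := ((n+1).choose k : ℚ)
  set B := (((n+1)+k).choose k : ℚ)
  have hk0 : (k:ℚ) ≠ 0 := by positivity
  have hk1' : ((k:ℚ)+1) ≠ 0 := by positivity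
  have hm0 : ((n:ℚ)+1) ≠ 0 := by positivity
  have hmk : ((n:ℚ)+1+k) ≠ 0 := by positivity
  have hmk2 : ((n:ℚ)+1-k) ≠ 0 := by
    have : (k:ℚ) ≤ (n:ℚ) := by exact_mod_cast hk
    intro h; nlinarith
  have hnk1 : ((n:ℚ)-k+1) ≠ 0 := by
    have : (k:ℚ) ≤ (n:ℚ) := by exact_mod_cast hk
    intro h; nlinarith
  push_cast
  simp only [pow_succ]
  field_simp
  ring

lemma Fq_top (n : ℕ) : Fq n (n+1) = 0 := by
  unfold Fq
  rw [Nat.choose_eq_zero_of_lt (by omega)]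
  simp

lemma point_eq (n : ℕ) :
    Fq (n+1) (n+1) - Fq n (n+1)
      = phiq (n+1) ((n+1)+1) - phiq (n+1) (n+1)
        + 5/2 * ((-1:ℚ)^(n+1) * (((2*(n+1)).choose (n+1) : ℕ) : ℚ) / ((n:ℚ)+1)^2) := by
  rw [Fq_top]
  have hphi0 : phiq (n+1) ((n+1)+1) = 0 := by
    unfold phiq gq
    rw [Nat.choose_eq_zero_of_lt (by omega)]
    simp
  rw [hphi0]
  unfold Fq phiq gq
  have h1 : (n+1)+(n+1)-1 = (2*n+1) := by omega
  have h2 : (n+1)-(n+1) = 0 := by omega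
  have h3 : (n+1)+(n+1) = (2*n+1)+1 := by omega
  have h4 : 2*(n+1) = (2*n+1)+1 := by omega
  rw [h1, h2, h4, show (n+1)+(n+1) = (2*n+1)+1 from by omega]
  rw [Hq_succ (2*n+1), Nat.choose_self]
  have hHq0 : Hq 0 = 0 := by unfold Hq; simp
  rw [hHq0]
  set X := Hq (2*n+1)
  set B := (((2*n+1)+1).choose (n+1) : ℚ)
  have hm : ((n:ℚ)+1) ≠ 0 := by positivity
  have h2n : ((2*n+1 : ℕ):ℚ)+1 ≠ 0 := by positivity
  push_cast
  simp only [pow_succ]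
  field_simp
  ring

lemma step (n : ℕ) :
    ∑ k ∈ Icc 1 (n+1), Fq (n+1) k
      = (∑ k ∈ Icc 1 n, Fq n k)
        + 5/2 * ((-1:ℚ)^(n+1) * (((2*(n+1)).choose (n+1) : ℕ) : ℚ) / ((n:ℚ)+1)^2)
        + 2/((n:ℚ)+1)^2 := by
  set E := 5/2 * ((-1:ℚ)^(n+1) * (((2*(n+1)).choose (n+1) : ℕ) : ℚ) / ((n:ℚ)+1)^2) with hE
  have hS : ∑ k ∈ Icc 1 (n+1), Fq n k = ∑ k ∈ Icc 1 n, Fq n k := by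
    rw [Finset.sum_Icc_succ_top (by omega), Fq_top, add_zero]
  have hpt : ∀ k ∈ Icc 1 (n+1), Fq (n+1) k
      = Fq n k + ((phiq (n+1) (k+1) - phiq (n+1) k) + (if k = n+1 then E else 0)) := by
    intro k hk
    simp only [mem_Icc] at hk
    rcases Nat.lt_or_ge k (n+1) with h | h
    · rw [if_neg (by omega)]
      have := point_lt n k hk.1 (by omega)
      linarith [this]
    · have hk' : k = n+1 := by omega
      subst hk'
      rw [if_pos rfl]
      have := point_eq n
      linarith [this]
  rw [Finset.sum_congr rfl hpt]
  rw [Finset.sum_add_distrib, Finset.sum_add_distrib, hS, tele]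
  have hite : ∑ k ∈ Icc 1 (n+1), (if k = n+1 then E else 0) = E := by
    rw [Finset.sum_ite_eq' (Icc 1 (n+1)) (n+1) (fun _ => E)]
    simp
  rw [hite]
  have hphi0 : phiq (n+1) ((n+1)+1) = 0 := by
    unfold phiq gq
    rw [Nat.choose_eq_zero_of_lt (by omega)]
    simp
  have hphi1 : phiq (n+1) 1 = -2/((n:ℚ)+1)^2 := by
    unfold phiq gq
    have h1 : (n+1)+1-1 = n+1 := by omega
    have h2 : (n+1)-1 = n := by omega
    rw [h1, h2, Hq_succ n, Nat.choose_one_right, Nat.choose_one_right]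
    have hm : ((n:ℚ)+1) ≠ 0 := by positivity
    push_cast
    field_simp
    ring
  rw [hphi0, hphi1]
  ring

theorem main0 (n : ℕ) :
    (∑ k ∈ Finset.Icc 1 n,
        (n.choose k : ℚ) * ((n + k).choose k : ℚ) * ((-1 : ℚ) ^ k / (k : ℚ))
          * ((∑ j ∈ Finset.Icc 1 (n + k), (1 : ℚ) / (j : ℚ))
              - (∑ j ∈ Finset.Icc 1 (n - k), (1 : ℚ) / (j : ℚ))))
      = (5 / 2) * (∑ k ∈ Finset.Icc 1 n, (-1 : ℚ) ^ k * ((2 * k).choose k : ℚ) / (k : ℚ) ^ 2)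
        + 2 * (∑ j ∈ Finset.Icc 1 n, (1 : ℚ) / (j : ℚ) ^ 2) := by
  have hL : ∀ m : ℕ, (∑ k ∈ Finset.Icc 1 m,
        (m.choose k : ℚ) * ((m + k).choose k : ℚ) * ((-1 : ℚ) ^ k / (k : ℚ))
          * ((∑ j ∈ Finset.Icc 1 (m + k), (1 : ℚ) / (j : ℚ))
              - (∑ j ∈ Finset.Icc 1 (m - k), (1 : ℚ) / (j : ℚ))))
      = ∑ k ∈ Icc 1 m, Fq m k := by
    intro m; apply Finset.sum_congr rfl; intro k _; rfl
  rw [hL]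
  induction n with
  | zero => simp
  | succ n ih =>
    rw [step n, ih]
    rw [Finset.sum_Icc_succ_top (show 1 ≤ n+1 by omega), Finset.sum_Icc_succ_top (show 1 ≤ n+1 by omega)]
    push_cast
    ring


/-- For every positive integer `n`,
`∑_{k=1}^n C(n,k)*C(n+k,k)*((-1)^k/k)*(H_{n+k} - H_{n-k})
  = (5/2) * ∑_{k=1}^n (-1)^k * C(2k,k) / k^2 + 2 * H_n^{(2)}`,
where `H_m = ∑_{j=1}^m 1/j` and `H_m^{(2)} = ∑_{j=1}^m 1/j^2`. -/
theorem sun_lemma_2_3b (n : ℕ) (hn : 0 < n) :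
    (∑ k ∈ Finset.Icc 1 n,
        (n.choose k : ℚ) * ((n + k).choose k : ℚ) * ((-1 : ℚ) ^ k / (k : ℚ))
          * ((∑ j ∈ Finset.Icc 1 (n + k), (1 : ℚ) / (j : ℚ))
              - (∑ j ∈ Finset.Icc 1 (n - k), (1 : ℚ) / (j : ℚ))))
      = (5 / 2) * (∑ k ∈ Finset.Icc 1 n, (-1 : ℚ) ^ k * ((2 * k).choose k : ℚ) / (k : ℚ) ^ 2)
        + 2 * (∑ j ∈ Finset.Icc 1 n, (1 : ℚ) / (j : ℚ) ^ 2) := main0 n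
end

section
/- For every nonnegative integer n, the sum over k from 0 to n of binom(2k,k)^2 / ((2(n+k)+1) * 16^k) equals (binom(2n,n)^2 / 16^n) times the sum over k from 0 to 2n of 1/(2k+1). -/
open Finset

private def g (n k : ℕ) : ℚ := ((2*k).choose k : ℚ)^2 / (((2*(n+k)+1 : ℕ):ℚ) * 16^k)

private def f (n k : ℕ) : ℚ := 4*(k:ℚ)^2 * g n k

private lemma cb_succ (k : ℕ) :
    ((k:ℚ)+1) * ((2*(k+1)).choose (k+1) : ℚ) = 2*(2*(k:ℚ)+1) * ((2*k).choose k : ℚ) := by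
  have := Nat.succ_mul_centralBinom_succ k
  have h2 : (((k+1) * Nat.centralBinom (k+1) : ℕ) : ℚ) = ((2 * (2*k+1) * Nat.centralBinom k : ℕ) : ℚ) := by
    exact_mod_cast congrArg (Nat.cast : ℕ → ℚ) this
  unfold Nat.centralBinom at h2
  push_cast at h2
  linarith [h2]

private lemma cb_succ' (k : ℕ) :
    ((2*(k+1)).choose (k+1) : ℚ) = 2*(2*(k:ℚ)+1) * ((2*k).choose k : ℚ) / ((k:ℚ)+1) := by
  have hk : ((k:ℚ)+1) ≠ 0 := by positivity
  field_simp
  linarith [cb_succ k]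

private lemma cert (n k : ℕ) :
    g (n+1) k
    = ((2*(n:ℚ)+1)^2/(2*(n:ℚ)+2)^2) * g n k + (f n (k+1) - f n k)/(2*(n:ℚ)+2)^2 := by
  unfold f g
  rw [cb_succ' k]
  push_cast
  have h1 : (2*((n:ℚ)+1+k)+1) ≠ 0 := by positivity
  have h2 : (2*((n:ℚ)+k)+1) ≠ 0 := by positivity
  have h3 : (2*((n:ℚ)+(k+1))+1) ≠ 0 := by positivity
  have h4 : (2*(n:ℚ)+2) ≠ 0 := by positivity
  have h5 : (16:ℚ)^k ≠ 0 := by positivity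
  have hk : ((k:ℚ)+1) ≠ 0 := by positivity
  field_simp
  ring

/-- For every nonnegative integer `n`,
`∑_{k=0}^n C(2k,k)^2 / ((2(n+k)+1) * 16^k)
  = (C(2n,n)^2 / 16^n) * ∑_{k=0}^{2n} 1/(2k+1)`. -/
theorem sun_lemma_2_5 (n : ℕ) :
    (∑ k ∈ Finset.range (n + 1),
        ((2 * k).choose k : ℚ) ^ 2 / (((2 * (n + k) + 1 : ℕ) : ℚ) * 16 ^ k))
      = (((2 * n).choose n : ℚ) ^ 2 / 16 ^ n)
        * (∑ k ∈ Finset.range (2 * n + 1), (1 : ℚ) / ((2 * k + 1 : ℕ) : ℚ)) := by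
  induction n with
  | zero => norm_num
  | succ n ih =>
    show (∑ k ∈ Finset.range (n + 1 + 1), g (n+1) k) = _
    have ih' : (∑ k ∈ Finset.range (n + 1), g n k)
        = (((2 * n).choose n : ℚ) ^ 2 / 16 ^ n)
          * (∑ k ∈ Finset.range (2 * n + 1), (1 : ℚ) / ((2 * k + 1 : ℕ) : ℚ)) := ih
    have hsum : (∑ k ∈ Finset.range (n + 1 + 1), g (n+1) k)
        = ((2*(n:ℚ)+1)^2/(2*(n:ℚ)+2)^2) * (∑ k ∈ Finset.range (n+1), g n k)
          + (g n (n+1) + g (n+1) (n+1)) := by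
      rw [Finset.sum_range_succ]
      rw [Finset.sum_congr rfl (fun k _ => cert n k)]
      rw [Finset.sum_add_distrib, ← Finset.mul_sum, ← Finset.sum_div,
        Finset.sum_range_sub (f n)]
      have hf0 : f n 0 = 0 := by simp [f]
      have hfn : (f n (n+1) - f n 0)/(2*(n:ℚ)+2)^2 = g n (n+1) := by
        rw [hf0, sub_zero]
        unfold f
        have h4 : ((2*(n:ℚ)+2)^2) ≠ 0 := by positivity
        push_cast
        field_simp
        ring
      rw [hfn]
      ring
    rw [hsum, ih']
    have hr : 2*(n+1)+1 = 2*n+1+1+1 := by ring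
    have hH : (∑ k ∈ Finset.range (2*(n+1)+1), (1:ℚ)/((2*k+1 : ℕ):ℚ))
        = (∑ k ∈ Finset.range (2*n+1), (1:ℚ)/((2*k+1 : ℕ):ℚ))
          + (1:ℚ)/((2*(2*n+1)+1 : ℕ):ℚ) + (1:ℚ)/((2*(2*n+1+1)+1 : ℕ):ℚ) := by
      rw [hr, Finset.sum_range_succ, Finset.sum_range_succ]
    rw [hH]
    generalize (∑ k ∈ Finset.range (2*n+1), (1:ℚ)/((2*k+1 : ℕ):ℚ)) = H
    unfold g
    rw [cb_succ' n]
    have hx1 : (2*((n:ℚ)+(n+1))+1) ≠ 0 := by positivity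
    have hx2 : (2*((n:ℚ)+1+(n+1))+1) ≠ 0 := by positivity
    have hx3 : (2*(2*(n:ℚ)+1)+1) ≠ 0 := by positivity
    have hx4 : (2*(2*(n:ℚ)+1+1)+1) ≠ 0 := by positivity
    have hn : ((n:ℚ)+1) ≠ 0 := by positivity
    have h16 : (16:ℚ)^n ≠ 0 := by positivity
    push_cast
    field_simp
    ring
end

section
/- For every positive integer n, the sum over k from 0 to n of ((-1)^k / (2k+1)^2) * binom(n,k) * binom(n+k,k) equals 1/(2n+1)^2 + (2/(2n+1)) times the sum over k from 0 to n-1 of 1/(2k+1). -/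
open Finset

lemma fwdDiff_iter_addRight (r j : ℕ) (hj : j ≤ r) :
    (fwdDiff 1)^[j] (fun x : ℕ => (((x + r).choose r : ℤ))) =
      fun x : ℕ => ((x + r).choose (r - j) : ℤ) := by
  induction j with
  | zero => simp
  | succ j ih =>
    rw [Function.iterate_succ_apply', ih (by omega)]
    funext x
    show ((x + 1 + r).choose (r - j) : ℤ) - ((x + r).choose (r - j)) = _
    have h1 : r - j = (r - (j + 1)) + 1 := by omega
    have h2 : x + 1 + r = (x + r) + 1 := by omega
    rw [h2, h1, Nat.choose_succ_succ']
    push_cast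
    ring

lemma alt_sum_choose_mul_choose (r M : ℕ) (h : r < M) :
    ∑ k ∈ Finset.range (M + 1), (-1 : ℤ) ^ k * (M.choose k : ℤ) * ((k + r).choose r : ℤ) = 0 := by
  have h0 : (fwdDiff 1)^[M] (fun x : ℕ => ((x + r).choose r : ℤ)) 0 = 0 := by
    obtain ⟨d, rfl⟩ : ∃ d, M = (r + 1) + d := ⟨M - (r + 1), by omega⟩
    rw [add_comm (r + 1) d, Function.iterate_add_apply]
    have hr1 : (fwdDiff 1)^[r + 1] (fun x : ℕ => ((x + r).choose r : ℤ)) = fun _ => 0 := by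
      rw [Function.iterate_succ_apply', fwdDiff_iter_addRight r r le_rfl]
      funext x
      simp [fwdDiff]
    rw [hr1]
    have hz : (fwdDiff (1 : ℕ))^[d] (fun _ : ℕ => (0 : ℤ)) = fun _ => 0 :=
      Function.iterate_fixed (by funext x; simp [fwdDiff]) d
    rw [hz]
  rw [fwdDiff_iter_eq_sum_shift] at h0
  simp only [smul_eq_mul, zero_add, smul_eq_mul, mul_one] at h0
  have key : ∀ k ∈ Finset.range (M + 1),
      (-1 : ℤ) ^ k * (M.choose k : ℤ) * ((k + r).choose r : ℤ)
        = (-1) ^ M * (((-1 : ℤ) ^ (M - k) * (M.choose k : ℤ)) * ((k + r).choose r : ℤ)) := by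
    intro k hk
    simp only [Finset.mem_range] at hk
    have hpow : (-1 : ℤ) ^ M = (-1) ^ (M - k) * (-1) ^ k := by
      rw [← pow_add]; congr 1; omega
    have h2 : ((-1 : ℤ)) ^ ((M - k) * 2) = 1 := by
      rw [pow_mul']; norm_num
    rw [hpow]; ring_nf; rw [h2]; ring
  rw [Finset.sum_congr rfl key, ← Finset.mul_sum]
  simp only [h0]
  ring

lemma aux_sum (m : ℕ) :
    ∑ k ∈ Finset.range (m + 2),
        (-1 : ℚ) ^ k * ((m + 1).choose k : ℚ) * ((m + k).choose k : ℚ) / (2 * k + 1)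
      = (2 * m + 2) / ((2 * m + 1) * (2 * m + 3)) := by
  induction m with
  | zero => norm_num [Finset.sum_range_succ]
  | succ m ih =>
    have hZ : ∑ k ∈ Finset.range (m + 3),
        (-1 : ℚ) ^ k * ((m + 2).choose k : ℚ) * ((m + k).choose k : ℚ) = 0 := by
      have h0 := alt_sum_choose_mul_choose m (m + 2) (by omega)
      have h1 : ((∑ k ∈ Finset.range (m + 3),
          (-1 : ℤ) ^ k * ((m + 2).choose k : ℤ) * ((k + m).choose m : ℤ) : ℤ) : ℚ) = 0 := by
        rw [h0]; norm_num
      push_cast at h1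
      rw [← h1]
      refine Finset.sum_congr rfl fun k _ => ?_
      rw [Nat.add_comm m k, Nat.choose_symm_add]
    have key : ∀ k ∈ Finset.range (m + 3),
        ((m : ℚ) + 1) * (2 * m + 5) *
            ((-1 : ℚ) ^ k * ((m + 2).choose k : ℚ) * ((m + 1 + k).choose k : ℚ) / (2 * k + 1))
          = ((m : ℚ) + 2) * (2 * m + 1) *
              ((-1 : ℚ) ^ k * ((m + 1).choose k : ℚ) * ((m + k).choose k : ℚ) / (2 * k + 1))
            + (2 * (m : ℚ) + 3) *
              ((-1 : ℚ) ^ k * ((m + 2).choose k : ℚ) * ((m + k).choose k : ℚ)) := by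
      intro k hk
      simp only [Finset.mem_range] at hk
      have h1n : (m + 1).choose k * (m + 1 + 1) = (m + 1 + 1).choose k * (m + 1 + 1 - k) :=
        Nat.choose_mul_succ_eq (m + 1) k
      have h2n : (m + k + 1) * ((m + k).choose k) = (m + 1 + k).choose k * (m + 1) := by
        have h := Nat.add_one_mul_choose_eq (m + k) m
        rw [Nat.choose_symm_add] at h
        have e : (m + k).succ.choose (m.succ) = (m + 1 + k).choose k := by
          have e2 : (m + k).succ = (m + 1) + k := by omega
          rw [e2, Nat.choose_symm_add]
        rw [e] at h
        simpa [Nat.succ_eq_add_one] using h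
      have c1 : ((m + 1).choose k : ℚ) * ((m : ℚ) + 2)
          = ((m + 2).choose k : ℚ) * ((m : ℚ) + 2 - k) := by
        have := congrArg (Nat.cast (R := ℚ)) h1n
        push_cast [Nat.cast_sub (show k ≤ m + 1 + 1 by omega)] at this
        convert this using 2 <;> push_cast <;> ring
      have c2 : ((m : ℚ) + k + 1) * ((m + k).choose k : ℚ)
          = ((m + 1 + k).choose k : ℚ) * ((m : ℚ) + 1) := by
        exact_mod_cast congrArg (Nat.cast (R := ℚ)) h2n
      have e1 : ((m + 1).choose k : ℚ)
          = ((m + 2).choose k : ℚ) * ((m : ℚ) + 2 - k) / ((m : ℚ) + 2) := by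
        rw [eq_div_iff (by positivity)]; linarith [c1]
      have e2 : ((m + 1 + k).choose k : ℚ)
          = ((m + k).choose k : ℚ) * ((m : ℚ) + k + 1) / ((m : ℚ) + 1) := by
        rw [eq_div_iff (by positivity)]; linarith [c2]
      rw [e1, e2]
      have hk1 : (2 * (k : ℚ) + 1) ≠ 0 := by positivity
      field_simp
      ring
    have hsum := Finset.sum_congr rfl key
    rw [← Finset.mul_sum, Finset.sum_add_distrib, ← Finset.mul_sum, ← Finset.mul_sum, hZ,
      mul_zero, add_zero] at hsum
    have hlast : ∑ k ∈ Finset.range (m + 3),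
        (-1 : ℚ) ^ k * ((m + 1).choose k : ℚ) * ((m + k).choose k : ℚ) / (2 * k + 1)
          = (2 * m + 2) / ((2 * m + 1) * (2 * m + 3)) := by
      rw [Finset.sum_range_succ]
      have : (m + 1).choose (m + 2) = 0 := by
        apply Nat.choose_eq_zero_of_lt; omega
      rw [this]
      push_cast
      rw [ih]
      ring
    rw [hlast] at hsum
    have hc : ((m : ℚ) + 1) * (2 * (m : ℚ) + 5) ≠ 0 := by positivity
    have goal_eq : ∑ k ∈ Finset.range (m + 1 + 2),
        (-1 : ℚ) ^ k * ((m + 1 + 1).choose k : ℚ) * ((m + 1 + k).choose k : ℚ) / (2 * k + 1)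
        = ∑ k ∈ Finset.range (m + 3),
        (-1 : ℚ) ^ k * ((m + 2).choose k : ℚ) * ((m + 1 + k).choose k : ℚ) / (2 * k + 1) := by
      norm_num
    rw [goal_eq]
    rw [← mul_div_assoc, eq_div_iff (by positivity)] at hsum
    push_cast
    rw [eq_div_iff (by positivity)]
    have key2 : (((m : ℚ) + 1) * (2 * (m : ℚ) + 1)) *
        ((∑ k ∈ Finset.range (m + 3),
          (-1 : ℚ) ^ k * ((m + 2).choose k : ℚ) * ((m + 1 + k).choose k : ℚ) / (2 * k + 1)) *
          ((2 * (m : ℚ) + 3) * (2 * (m : ℚ) + 5)))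
        = (((m : ℚ) + 1) * (2 * (m : ℚ) + 1)) * (2 * (m : ℚ) + 4) := by
      linear_combination hsum
    have final := mul_left_cancel₀ (show (((m : ℚ) + 1) * (2 * (m : ℚ) + 1)) ≠ 0 by positivity) key2
    linear_combination final

lemma main_all (n : ℕ) :
    (∑ k ∈ Finset.range (n + 1),
        ((-1 : ℚ) ^ k / ((2 * k + 1 : ℕ) : ℚ) ^ 2) * (n.choose k : ℚ) * ((n + k).choose k : ℚ))
      = 1 / ((2 * n + 1 : ℕ) : ℚ) ^ 2
        + (2 / ((2 * n + 1 : ℕ) : ℚ)) * (∑ k ∈ Finset.range n, (1 : ℚ) / ((2 * k + 1 : ℕ) : ℚ)) := by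
  induction n with
  | zero => norm_num
  | succ n ih =>
    have key : ∀ k ∈ Finset.range (n + 2),
        (2 * (n : ℚ) + 3) *
            (((-1 : ℚ) ^ k / ((2 * k + 1 : ℕ) : ℚ) ^ 2) * ((n + 1).choose k : ℚ) *
              ((n + 1 + k).choose k : ℚ))
          = (2 * (n : ℚ) + 1) *
              (((-1 : ℚ) ^ k / ((2 * k + 1 : ℕ) : ℚ) ^ 2) * (n.choose k : ℚ) *
                ((n + k).choose k : ℚ))
            + 2 * ((-1 : ℚ) ^ k * ((n + 1).choose k : ℚ) * ((n + k).choose k : ℚ) / (2 * k + 1)) := by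
      intro k hk
      simp only [Finset.mem_range] at hk
      have h1n : n.choose k * (n + 1) = (n + 1).choose k * (n + 1 - k) :=
        Nat.choose_mul_succ_eq n k
      have h2n : (n + k + 1) * ((n + k).choose k) = (n + 1 + k).choose k * (n + 1) := by
        have h := Nat.add_one_mul_choose_eq (n + k) n
        rw [Nat.choose_symm_add] at h
        have e : (n + k).succ.choose (n.succ) = (n + 1 + k).choose k := by
          have e2 : (n + k).succ = (n + 1) + k := by omega
          rw [e2, Nat.choose_symm_add]
        rw [e] at h
        simpa [Nat.succ_eq_add_one] using h
      have c1 : (n.choose k : ℚ) * ((n : ℚ) + 1)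
          = ((n + 1).choose k : ℚ) * ((n : ℚ) + 1 - k) := by
        have := congrArg (Nat.cast (R := ℚ)) h1n
        push_cast [Nat.cast_sub (show k ≤ n + 1 by omega)] at this
        linarith [this]
      have c2 : ((n : ℚ) + k + 1) * ((n + k).choose k : ℚ)
          = ((n + 1 + k).choose k : ℚ) * ((n : ℚ) + 1) := by
        exact_mod_cast congrArg (Nat.cast (R := ℚ)) h2n
      have e1 : (n.choose k : ℚ)
          = ((n + 1).choose k : ℚ) * ((n : ℚ) + 1 - k) / ((n : ℚ) + 1) := by
        rw [eq_div_iff (by positivity)]; linarith [c1]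
      have e2 : ((n + 1 + k).choose k : ℚ)
          = ((n + k).choose k : ℚ) * ((n : ℚ) + k + 1) / ((n : ℚ) + 1) := by
        rw [eq_div_iff (by positivity)]; linarith [c2]
      rw [e1, e2]
      have hD : ((2 * k + 1 : ℕ) : ℚ) = 2 * (k : ℚ) + 1 := by push_cast; ring
      rw [hD]
      have h1 : (2 * (k : ℚ) + 1) ≠ 0 := by positivity
      field_simp
      ring
    have hsum := Finset.sum_congr rfl key
    rw [← Finset.mul_sum, Finset.sum_add_distrib, ← Finset.mul_sum, ← Finset.mul_sum] at hsum
    rw [aux_sum n] at hsum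
    have hprev : ∑ k ∈ Finset.range (n + 2),
        ((-1 : ℚ) ^ k / ((2 * k + 1 : ℕ) : ℚ) ^ 2) * (n.choose k : ℚ) * ((n + k).choose k : ℚ)
        = 1 / ((2 * n + 1 : ℕ) : ℚ) ^ 2
          + (2 / ((2 * n + 1 : ℕ) : ℚ)) * (∑ k ∈ Finset.range n, (1 : ℚ) / ((2 * k + 1 : ℕ) : ℚ)) := by
      rw [Finset.sum_range_succ]
      have : n.choose (n + 1) = 0 := by apply Nat.choose_eq_zero_of_lt; omega
      rw [this, ih]
      norm_num
    rw [hprev] at hsum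
    -- now express the goal
    have hgoal_sum : ∑ k ∈ Finset.range (n + 1), (1 : ℚ) / ((2 * k + 1 : ℕ) : ℚ)
        = (∑ k ∈ Finset.range n, (1 : ℚ) / ((2 * k + 1 : ℕ) : ℚ)) + 1 / (2 * (n : ℚ) + 1) := by
      rw [Finset.sum_range_succ]
      push_cast
      ring
    rw [show n + 1 + 1 = n + 2 from rfl, hgoal_sum]
    push_cast at hsum ⊢
    set S := ∑ k ∈ Finset.range (n + 2),
        ((-1 : ℚ) ^ k / (2 * (k : ℚ) + 1) ^ 2) * ((n + 1).choose k : ℚ) * ((n + 1 + k).choose k : ℚ) with hS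
    set H := ∑ k ∈ Finset.range n, (1 : ℚ) / (2 * (k : ℚ) + 1) with hH
    have h1 : (2 * (n : ℚ) + 1) ≠ 0 := by positivity
    have h3 : (2 * (n : ℚ) + 3) ≠ 0 := by positivity
    refine mul_left_cancel₀ h3 ?_
    rw [hsum]
    field_simp
    ring


/-- For every positive integer `n`,
`∑_{k=0}^n ((-1)^k/(2k+1)^2) * C(n,k) * C(n+k,k)
  = 1/(2n+1)^2 + (2/(2n+1)) * ∑_{k=0}^{n-1} 1/(2k+1)`. -/
theorem sun_lemma_3_1b (n : ℕ) (hn : 0 < n) :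
    (∑ k ∈ Finset.range (n + 1),
        ((-1 : ℚ) ^ k / ((2 * k + 1 : ℕ) : ℚ) ^ 2) * (n.choose k : ℚ) * ((n + k).choose k : ℚ))
      = 1 / ((2 * n + 1 : ℕ) : ℚ) ^ 2
        + (2 / ((2 * n + 1 : ℕ) : ℚ)) * (∑ k ∈ Finset.range n, (1 : ℚ) / ((2 * k + 1 : ℕ) : ℚ)) :=
  main_all n
end

section
/- Let p > 3 be a prime. Then the sum over k from 1 to p-1 of binom(2k,k)^2 / (k^2 * 16^k) is congruent to -2*H_{(p-1)/2}^2 modulo p^2, where H_n = sum_{j=1}^n 1/j. -/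
open Finset

namespace SunAuxC

noncomputable def H (n : ℕ) : ℚ := ∑ j ∈ Finset.Icc 1 n, (1 : ℚ) / j

lemma H_succ (n : ℕ) : H (n + 1) = H n + 1 / ((n : ℚ) + 1) := by
  unfold H
  rw [Finset.sum_Icc_succ_top (by omega : 1 ≤ n + 1)]
  push_cast
  ring

lemma Icc_to_range (n : ℕ) (f : ℕ → ℚ) :
    ∑ k ∈ Finset.Icc 1 n, f k = ∑ i ∈ Finset.range n, f (i + 1) := by
  rw [← Finset.Ico_add_one_right_eq_Icc, Finset.sum_Ico_eq_sum_range]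
  exact Finset.sum_congr rfl fun i _ => by rw [add_comm]

lemma qR1 (n k : ℕ) (hk : k ≤ n + 1) :
    ((n + 1).choose k : ℚ) * ((n : ℚ) + 1 - k) = (n.choose k : ℚ) * ((n : ℚ) + 1) := by
  have h := Nat.choose_mul_succ_eq n k
  have h2 : ((n.choose k * (n + 1) : ℕ) : ℚ) = (((n + 1).choose k * (n + 1 - k) : ℕ) : ℚ) := by
    exact_mod_cast congrArg (fun x : ℕ => (x : ℚ)) h
  push_cast [Nat.cast_sub hk] at h2
  linarith

lemma e1 (n j : ℕ) : (((n + 1).choose (j + 1) : ℚ)) * ((j : ℚ) + 1) = ((n : ℚ) + 1) * (n.choose j : ℚ) := by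
  have h := (Nat.add_one_mul_choose_eq n j).symm
  have h2 : (((n + 1).choose (j + 1) * (j + 1) : ℕ) : ℚ) = (((n + 1) * n.choose j : ℕ) : ℚ) := by
    exact_mod_cast congrArg (fun x : ℕ => (x : ℚ)) h
  push_cast at h2
  linarith

lemma e2 (n j : ℕ) (hj : j ≤ n) :
    ((n.choose (j + 1) : ℚ)) * ((j : ℚ) + 1) = (n.choose j : ℚ) * ((n : ℚ) - j) := by
  have h := Nat.choose_succ_right_eq n j
  have h2 : ((n.choose (j + 1) * (j + 1) : ℕ) : ℚ) = ((n.choose j * (n - j) : ℕ) : ℚ) := by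
    exact_mod_cast congrArg (fun x : ℕ => (x : ℚ)) h
  push_cast [Nat.cast_sub hj] at h2
  linarith

lemma tele (n j : ℕ) (hj : j + 1 ≤ n) :
    ((n + 1).choose (j + 1) : ℚ) * ((n + (j + 1)).choose (j + 1) : ℚ) =
      (n.choose (j + 1) : ℚ) * ((n + (j + 1) + 1).choose (j + 1) : ℚ)
        + (n.choose j : ℚ) * ((n + j + 1).choose j : ℚ) := by
  have hne : ((j : ℚ) + 1) ≠ 0 := by positivity
  have hb1 : ((n + 1).choose (j + 1) : ℚ) = ((n : ℚ) + 1) * (n.choose j : ℚ) / ((j : ℚ) + 1) := by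
    rw [eq_div_iff hne]; exact e1 n j
  have hb2 : (n.choose (j + 1) : ℚ) = (n.choose j : ℚ) * ((n : ℚ) - j) / ((j : ℚ) + 1) := by
    rw [eq_div_iff hne]; exact e2 n j (by omega)
  have hb3 : ((n + (j + 1)).choose (j + 1) : ℚ)
      = ((n + j + 1).choose j : ℚ) * ((n : ℚ) + 1) / ((j : ℚ) + 1) := by
    rw [eq_div_iff hne]
    have h := e2 (n + j + 1) j (by omega)
    have hx : ((n + j + 1 : ℕ) : ℚ) - (j : ℚ) = (n : ℚ) + 1 := by push_cast; ring
    rw [hx] at h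
    have hrw : n + (j + 1) = n + j + 1 := by omega
    rw [hrw]; exact h
  have hb4 : ((n + (j + 1) + 1).choose (j + 1) : ℚ)
      = ((n + j + 1).choose j : ℚ) * ((n : ℚ) + (j : ℚ) + 2) / ((j : ℚ) + 1) := by
    rw [eq_div_iff hne]
    have h := e1 (n + j + 1) j
    have hrw : n + (j + 1) + 1 = n + j + 1 + 1 := by omega
    rw [hrw]
    have hx : ((n + j + 1 : ℕ) : ℚ) + 1 = (n : ℚ) + (j : ℚ) + 2 := by push_cast; ring
    rw [hx] at h
    linarith
  rw [hb1, hb2, hb3, hb4]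
  field_simp
  ring

lemma L0 (n : ℕ) :
    ∑ k ∈ Finset.Icc 1 n, ((-1 : ℚ)) ^ k * ((n + 1).choose k : ℚ) * ((n + k).choose k : ℚ)
      = (-1 : ℚ) ^ n * ((2 * n + 1).choose n : ℚ) - 1 := by
  have step : ∀ i ∈ Finset.range n,
      (-1 : ℚ) ^ (i + 1) * ((n + 1).choose (i + 1) : ℚ) * ((n + (i + 1)).choose (i + 1) : ℚ)
        = ((fun k => (-1 : ℚ) ^ k * (n.choose k : ℚ) * ((n + k + 1).choose k : ℚ)) (i + 1)
            - (fun k => (-1 : ℚ) ^ k * (n.choose k : ℚ) * ((n + k + 1).choose k : ℚ)) i) := by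
    intro i hi
    have hin : i + 1 ≤ n := Finset.mem_range.mp hi
    have t := tele n i hin
    simp only
    have hrw : n + (i + 1) + 1 = n + (i + 1) + 1 := rfl
    linear_combination ((-1 : ℚ) ^ (i + 1)) * t
  rw [Icc_to_range, Finset.sum_congr rfl step, Finset.sum_range_sub
    (fun k => (-1 : ℚ) ^ k * (n.choose k : ℚ) * ((n + k + 1).choose k : ℚ))]
  have h1 : n + n + 1 = 2 * n + 1 := by ring
  simp [Nat.choose_self, Nat.choose_zero_right, h1]

lemma hcb (n : ℕ) : ((2 * n + 2).choose (n + 1)) = 2 * ((2 * n + 1).choose n) := by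
  have h1 : (2 * n + 2).choose (n + 1) = (2 * n + 1).choose n + (2 * n + 1).choose (n + 1) := by
    have : 2 * n + 2 = (2 * n + 1) + 1 := by omega
    rw [this, Nat.choose_succ_succ]
  have h2 : (2 * n + 1).choose (n + 1) = (2 * n + 1).choose n := by
    have := Nat.choose_symm (show n + 1 ≤ 2 * n + 1 by omega)
    have hx : 2 * n + 1 - (n + 1) = n := by omega
    rw [hx] at this
    exact this.symm
  omega

-- pointwise rewriting lemmas
lemma hnk_eq (n k : ℕ) (hk : k ≤ n) :
    (n.choose k : ℚ) = ((n + 1).choose k : ℚ) * ((n : ℚ) + 1 - k) / ((n : ℚ) + 1) := by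
  have hne : ((n : ℚ) + 1) ≠ 0 := by positivity
  rw [eq_div_iff hne]
  linarith [qR1 n k (by omega)]

lemma hc_eq (n k : ℕ) :
    ((n + 1 + k).choose k : ℚ) = ((n + k).choose k : ℚ) * ((n : ℚ) + k + 1) / ((n : ℚ) + 1) := by
  have hne : ((n : ℚ) + 1) ≠ 0 := by positivity
  rw [eq_div_iff hne]
  have h := qR1 (n + k) k (by omega)
  have hrw : n + 1 + k = n + k + 1 := by omega
  rw [hrw]
  have hx : ((n + k : ℕ) : ℚ) + 1 - (k : ℚ) = (n : ℚ) + 1 := by push_cast; ring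
  have hy : ((n + k : ℕ) : ℚ) + 1 = (n : ℚ) + (k : ℚ) + 1 := by push_cast; ring
  rw [hx, hy] at h
  exact h

lemma PW1 (n k : ℕ) (h1 : 1 ≤ k) (hk : k ≤ n) :
    (-1 : ℚ) ^ k * ((n + 1).choose k : ℚ) * ((n + 1 + k).choose k : ℚ) / k
      = (-1 : ℚ) ^ k * (n.choose k : ℚ) * ((n + k).choose k : ℚ) / k
        + 2 / ((n : ℚ) + 1) * ((-1 : ℚ) ^ k * ((n + 1).choose k : ℚ) * ((n + k).choose k : ℚ)) := by
  have hne : ((n : ℚ) + 1) ≠ 0 := by positivity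
  have hkne : (k : ℚ) ≠ 0 := by positivity
  rw [hc_eq n k, hnk_eq n k hk]
  field_simp
  ring

lemma PW2 (n k : ℕ) (h1 : 1 ≤ k) (hk : k ≤ n) :
    (-1 : ℚ) ^ k * ((n + 1).choose k : ℚ) * ((n + 1 + k).choose k : ℚ) / (k : ℚ) ^ 2
      = (-1 : ℚ) ^ k * (n.choose k : ℚ) * ((n + k).choose k : ℚ) / (k : ℚ) ^ 2
        + 2 / ((n : ℚ) + 1) * ((-1 : ℚ) ^ k * (n.choose k : ℚ) * ((n + k).choose k : ℚ) / k)
        + 2 / (((n : ℚ) + 1) * ((n : ℚ) + 1))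
            * ((-1 : ℚ) ^ k * ((n + 1).choose k : ℚ) * ((n + k).choose k : ℚ)) := by
  have hne : ((n : ℚ) + 1) ≠ 0 := by positivity
  have hkne : (k : ℚ) ≠ 0 := by positivity
  rw [hc_eq n k, hnk_eq n k hk]
  field_simp
  ring

lemma L1 (n : ℕ) :
    ∑ k ∈ Finset.Icc 1 n, (-1 : ℚ) ^ k * (n.choose k : ℚ) * ((n + k).choose k : ℚ) / k
      = -2 * H n := by
  induction n with
  | zero => simp [H]
  | succ n ih =>
    rw [Finset.sum_Icc_succ_top (by omega : 1 ≤ n + 1)]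
    have hsplit : ∑ k ∈ Finset.Icc 1 n,
        (-1 : ℚ) ^ k * ((n + 1).choose k : ℚ) * ((n + 1 + k).choose k : ℚ) / k
        = ∑ k ∈ Finset.Icc 1 n, ((-1 : ℚ) ^ k * (n.choose k : ℚ) * ((n + k).choose k : ℚ) / k
            + 2 / ((n : ℚ) + 1) * ((-1 : ℚ) ^ k * ((n + 1).choose k : ℚ) * ((n + k).choose k : ℚ))) := by
      refine Finset.sum_congr rfl fun k hk => ?_
      obtain ⟨hk1, hk2⟩ := Finset.mem_Icc.mp hk
      exact PW1 n k hk1 hk2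
    rw [hsplit, Finset.sum_add_distrib, ← Finset.mul_sum, ih, L0 n]
    have htop : ((n + 1 + (n + 1)).choose (n + 1) : ℚ) = 2 * ((2 * n + 1).choose n : ℚ) := by
      have : n + 1 + (n + 1) = 2 * n + 2 := by omega
      rw [this]
      exact_mod_cast congrArg (fun x : ℕ => (x : ℚ)) (hcb n)
    rw [htop, Nat.choose_self, H_succ]
    have hne : ((n : ℚ) + 1) ≠ 0 := by positivity
    field_simp
    push_cast
    ring

lemma L2 (n : ℕ) :
    ∑ k ∈ Finset.Icc 1 n, (-1 : ℚ) ^ k * (n.choose k : ℚ) * ((n + k).choose k : ℚ) / (k : ℚ) ^ 2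
      = -2 * (H n) ^ 2 := by
  induction n with
  | zero => simp [H]
  | succ n ih =>
    rw [Finset.sum_Icc_succ_top (by omega : 1 ≤ n + 1)]
    have hsplit : ∑ k ∈ Finset.Icc 1 n,
        (-1 : ℚ) ^ k * ((n + 1).choose k : ℚ) * ((n + 1 + k).choose k : ℚ) / (k : ℚ) ^ 2
        = ∑ k ∈ Finset.Icc 1 n,
            ((-1 : ℚ) ^ k * (n.choose k : ℚ) * ((n + k).choose k : ℚ) / (k : ℚ) ^ 2
            + 2 / ((n : ℚ) + 1) * ((-1 : ℚ) ^ k * (n.choose k : ℚ) * ((n + k).choose k : ℚ) / k)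
            + 2 / (((n : ℚ) + 1) * ((n : ℚ) + 1))
                * ((-1 : ℚ) ^ k * ((n + 1).choose k : ℚ) * ((n + k).choose k : ℚ))) := by
      refine Finset.sum_congr rfl fun k hk => ?_
      obtain ⟨hk1, hk2⟩ := Finset.mem_Icc.mp hk
      exact PW2 n k hk1 hk2
    rw [hsplit, Finset.sum_add_distrib, Finset.sum_add_distrib, ← Finset.mul_sum, ← Finset.mul_sum,
      ih, L1 n, L0 n]
    have htop : ((n + 1 + (n + 1)).choose (n + 1) : ℚ) = 2 * ((2 * n + 1).choose n : ℚ) := by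
      have : n + 1 + (n + 1) = 2 * n + 2 := by omega
      rw [this]
      exact_mod_cast congrArg (fun x : ℕ => (x : ℚ)) (hcb n)
    rw [htop, Nat.choose_self, H_succ]
    have hne : ((n : ℚ) + 1) ≠ 0 := by positivity
    field_simp
    push_cast
    ring

def Mk : ℕ → ℤ := fun k => ∏ j ∈ Finset.range k, (2 * (j : ℤ) + 1)

def Nk (p : ℕ) : ℕ → ℤ := fun k => ∏ j ∈ Finset.range k, ((2 * (j : ℤ) + 1) ^ 2 - (p : ℤ) ^ 2)

lemma NA (p k : ℕ) : (p : ℤ) ^ 2 ∣ (Mk k) ^ 2 - Nk p k := by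
  induction k with
  | zero => simp [Mk, Nk]
  | succ k ih =>
    obtain ⟨c, hc⟩ := ih
    refine ⟨(2 * (k : ℤ) + 1) ^ 2 * c + Nk p k, ?_⟩
    have hM : Mk (k + 1) = Mk k * (2 * (k : ℤ) + 1) := Finset.prod_range_succ _ k
    have hN : Nk p (k + 1) = Nk p k * ((2 * (k : ℤ) + 1) ^ 2 - (p : ℤ) ^ 2) :=
      Finset.prod_range_succ _ k
    rw [hM, hN]
    linear_combination ((2 * (k : ℤ) + 1) ^ 2) * hc

lemma NB (k : ℕ) : (((2 * k).choose k : ℚ)) * (k.factorial : ℚ) = 2 ^ k * (Mk k : ℚ) := by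
  induction k with
  | zero => simp [Mk]
  | succ k ih =>
    have h := Nat.succ_mul_centralBinom_succ k
    rw [Nat.centralBinom, Nat.centralBinom] at h
    have hq : ((k : ℚ) + 1) * ((2 * (k + 1)).choose (k + 1) : ℚ)
        = 2 * (2 * (k : ℚ) + 1) * ((2 * k).choose k : ℚ) := by
      have h2 : (((k + 1) * (2 * (k + 1)).choose (k + 1) : ℕ) : ℚ)
          = ((2 * (2 * k + 1) * (2 * k).choose k : ℕ) : ℚ) := by
        exact_mod_cast congrArg (fun x : ℕ => (x : ℚ)) h
      push_cast at h2
      linarith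
    have hM : Mk (k + 1) = Mk k * (2 * (k : ℤ) + 1) := Finset.prod_range_succ _ k
    rw [Nat.factorial_succ, hM]
    push_cast
    linear_combination (k.factorial : ℚ) * hq + 2 * (2 * (k : ℚ) + 1) * ih

lemma NC (m : ℕ) : ∀ k, k ≤ m →
    ((-1 : ℚ)) ^ k * (m.choose k : ℚ) * ((m + k).choose k : ℚ) * (4 ^ k * (k.factorial : ℚ) ^ 2)
      = ((Nk (2 * m + 1) k : ℤ) : ℚ) := by
  intro k
  induction k with
  | zero => simp [Nk]
  | succ k ih =>
    intro hk1
    have hk : k ≤ m := by omega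
    have hkq : ((k : ℚ) + 1) ≠ 0 := by positivity
    have hA : (m.choose (k + 1) : ℚ) = (m.choose k : ℚ) * ((m : ℚ) - k) / ((k : ℚ) + 1) := by
      rw [eq_div_iff hkq]; exact e2 m k hk
    have hB : ((m + (k + 1)).choose (k + 1) : ℚ)
        = ((m + k).choose k : ℚ) * ((m : ℚ) + k + 1) / ((k : ℚ) + 1) := by
      rw [eq_div_iff hkq]
      have h := e1 (m + k) k
      have hrw : m + (k + 1) = m + k + 1 := by omega
      rw [hrw]
      have hx : ((m + k : ℕ) : ℚ) + 1 = (m : ℚ) + (k : ℚ) + 1 := by push_cast; ring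
      rw [hx] at h
      linarith
    have hN : Nk (2 * m + 1) (k + 1)
        = Nk (2 * m + 1) k * ((2 * (k : ℤ) + 1) ^ 2 - ((2 * m + 1 : ℕ) : ℤ) ^ 2) :=
      Finset.prod_range_succ _ k
    have ihk := ih hk
    rw [hA, hB, hN, Nat.factorial_succ]
    push_cast
    field_simp
    rw [← ihk]
    ring

def Good (p : ℕ) (q : ℚ) : Prop :=
  ∃ a b : ℤ, ¬ (p : ℤ) ∣ b ∧ q * b = a ∧ (p : ℤ) ^ 2 ∣ a

lemma good_zero {p : ℕ} (hp : 1 < p) : Good p 0 := by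
  refine ⟨0, 1, ?_, by simp, dvd_zero _⟩
  intro h
  have h1 := Int.le_of_dvd one_pos h
  have : (1 : ℤ) < (p : ℤ) := by exact_mod_cast hp
  omega

lemma good_add {p : ℕ} (hp : p.Prime) {q r : ℚ} (hq : Good p q) (hr : Good p r) :
    Good p (q + r) := by
  obtain ⟨a1, b1, hb1, hq1, hd1⟩ := hq
  obtain ⟨a2, b2, hb2, hq2, hd2⟩ := hr
  refine ⟨a1 * b2 + a2 * b1, b1 * b2, ?_, ?_, ?_⟩
  · intro h
    rcases ((Nat.prime_iff_prime_int.mp hp).dvd_mul.mp h) with h' | h'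
    · exact hb1 h'
    · exact hb2 h'
  · push_cast
    calc (q + r) * ((b1 : ℚ) * b2) = q * b1 * b2 + r * b2 * b1 := by ring
    _ = (a1 : ℚ) * b2 + (a2 : ℚ) * b1 := by rw [hq1, hq2]
  · exact dvd_add (Dvd.dvd.mul_right hd1 b2) (Dvd.dvd.mul_right hd2 b1)

lemma good_sum {p : ℕ} (hp : p.Prime) (s : Finset ℕ) (f : ℕ → ℚ)
    (h : ∀ i ∈ s, Good p (f i)) : Good p (∑ i ∈ s, f i) :=
  Finset.sum_induction f (Good p) (fun _ _ => good_add hp) (good_zero hp.one_lt) h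

lemma good_num {p : ℕ} (hp : p.Prime) {q : ℚ} (h : Good p q) : (p : ℤ) ^ 2 ∣ q.num := by
  obtain ⟨a, b, hb, hqb, hdvd⟩ := h
  have hden : ((q.den : ℚ)) ≠ 0 := by
    exact_mod_cast q.den_ne_zero
  have hq1 : (q.num : ℚ) = q * q.den := by
    have h0 := Rat.num_div_den q
    rw [div_eq_iff hden] at h0
    linarith
  have h2 : ((q.num * b : ℤ) : ℚ) = ((a * q.den : ℤ) : ℚ) := by
    push_cast
    rw [hq1]
    calc q * (q.den : ℚ) * b = q * b * q.den := by ring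
    _ = (a : ℚ) * q.den := by rw [hqb]
  have h3 : q.num * b = a * (q.den : ℤ) := by exact_mod_cast h2
  have hcp : IsCoprime ((p : ℤ) ^ 2) b :=
    (((Nat.prime_iff_prime_int.mp hp).coprime_iff_not_dvd).mpr hb).pow_left
  exact hcp.dvd_of_dvd_mul_right (h3 ▸ Dvd.dvd.mul_right hdvd (q.den : ℤ))

lemma p_not_dvd_aux {p : ℕ} (hp : p.Prime) {m k : ℕ} (hpm : p = 2 * m + 1) (hm1 : 1 ≤ m)
    (hk : 1 ≤ k) (hkp : k < p) : ¬ (p : ℤ) ∣ (4 ^ k * ((k.factorial : ℤ)) ^ 2 * (k : ℤ) ^ 2) := by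
  intro h
  have hpZ : Prime ((p : ℤ)) := Nat.prime_iff_prime_int.mp hp
  rcases hpZ.dvd_mul.mp h with h' | h'
  · rcases hpZ.dvd_mul.mp h' with h'' | h''
    · have h2 : (p : ℤ) ∣ 4 := hpZ.dvd_of_dvd_pow h''
      have h3 : (p : ℤ) ≤ 4 := Int.le_of_dvd (by norm_num) h2
      have h4 : (5 : ℤ) ≤ p ∨ p = 3 := by
        have : p ≠ 4 := by rintro rfl; norm_num at hp
        omega
      rcases h4 with h4 | h4
      · omega
      · rw [h4] at h2; norm_num at h2
    · have h2 : (p : ℤ) ∣ (k.factorial : ℤ) := hpZ.dvd_of_dvd_pow h''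
      have h3 : p ∣ k.factorial := by exact_mod_cast h2
      have h4 := (Nat.Prime.dvd_factorial hp).mp h3
      omega
  · have h2 : (p : ℤ) ∣ (k : ℤ) := hpZ.dvd_of_dvd_pow h'
    have h3 : p ∣ k := by exact_mod_cast h2
    have h4 := Nat.le_of_dvd (by omega) h3
    omega

lemma good_head {p : ℕ} (hp : p.Prime) {m k : ℕ} (hpm : p = 2 * m + 1) (hm1 : 1 ≤ m)
    (hk1 : 1 ≤ k) (hk2 : k ≤ m) :
    Good p (((2 * k).choose k : ℚ) ^ 2 / ((k : ℚ) ^ 2 * 16 ^ k)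
      - (-1 : ℚ) ^ k * (m.choose k : ℚ) * ((m + k).choose k : ℚ) / (k : ℚ) ^ 2) := by
  have hkq : (k : ℚ) ≠ 0 := by positivity
  have h16 : (16 : ℚ) ^ k = 4 ^ k * 4 ^ k := by rw [← mul_pow]; norm_num
  have h4sq : (4 : ℚ) ^ k = 2 ^ k * 2 ^ k := by rw [← mul_pow]; norm_num
  have hnb := NB k
  have hsq : ((2 * k).choose k : ℚ) ^ 2 * (k.factorial : ℚ) ^ 2 = 4 ^ k * ((Mk k : ℤ) : ℚ) ^ 2 := by
    rw [h4sq]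
    linear_combination (((2 * k).choose k : ℚ) * (k.factorial : ℚ) + 2 ^ k * ((Mk k : ℤ) : ℚ)) * hnb
  have hnc := NC m k hk2
  refine ⟨Mk k ^ 2 - Nk p k, 4 ^ k * ((k.factorial : ℤ)) ^ 2 * (k : ℤ) ^ 2,
    p_not_dvd_aux hp hpm hm1 hk1 (by omega), ?_, NA p k⟩
  have hterm : ((2 * k).choose k : ℚ) ^ 2 / ((k : ℚ) ^ 2 * 16 ^ k)
      * ((4 : ℚ) ^ k * (k.factorial : ℚ) ^ 2 * (k : ℚ) ^ 2) = ((Mk k : ℤ) : ℚ) ^ 2 := by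
    rw [h16]
    have h4ne : ((4 : ℚ) ^ k) ≠ 0 := by positivity
    field_simp
    linear_combination hsq
  have hs : (-1 : ℚ) ^ k * (m.choose k : ℚ) * ((m + k).choose k : ℚ) / (k : ℚ) ^ 2
      * ((4 : ℚ) ^ k * (k.factorial : ℚ) ^ 2 * (k : ℚ) ^ 2) = ((Nk p k : ℤ) : ℚ) := by
    rw [hpm]
    calc (-1 : ℚ) ^ k * (m.choose k : ℚ) * ((m + k).choose k : ℚ) / (k : ℚ) ^ 2
        * ((4 : ℚ) ^ k * (k.factorial : ℚ) ^ 2 * (k : ℚ) ^ 2)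
        = (-1 : ℚ) ^ k * (m.choose k : ℚ) * ((m + k).choose k : ℚ)
            * (4 ^ k * (k.factorial : ℚ) ^ 2) := by field_simp
    _ = ((Nk (2 * m + 1) k : ℤ) : ℚ) := hnc
  push_cast
  push_cast at hterm hs
  rw [sub_mul]
  rw [hterm, hs]

lemma good_tail {p : ℕ} (hp : p.Prime) {m k : ℕ} (hpm : p = 2 * m + 1) (hm1 : 1 ≤ m)
    (hk1 : m < k) (hk2 : k ≤ p - 1) :
    Good p (((2 * k).choose k : ℚ) ^ 2 / ((k : ℚ) ^ 2 * 16 ^ k)) := by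
  have hkp : k < p := by omega
  have hk0 : 1 ≤ k := by omega
  have hkq : (k : ℚ) ≠ 0 := by positivity
  have hpZ : Prime ((p : ℤ)) := Nat.prime_iff_prime_int.mp hp
  refine ⟨((2 * k).choose k : ℤ) ^ 2, (k : ℤ) ^ 2 * 16 ^ k, ?_, ?_, ?_⟩
  · intro h
    rcases hpZ.dvd_mul.mp h with h' | h'
    · have h2 : (p : ℤ) ∣ (k : ℤ) := hpZ.dvd_of_dvd_pow h'
      have h3 : p ∣ k := by exact_mod_cast h2
      have h4 := Nat.le_of_dvd (by omega) h3
      omega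
    · have h2 : (p : ℤ) ∣ 16 := hpZ.dvd_of_dvd_pow h'
      have h3 : (p : ℤ) ∣ (2 : ℤ) ^ 4 := by norm_num at h2 ⊢; exact h2
      have h4 : (p : ℤ) ∣ 2 := hpZ.dvd_of_dvd_pow h3
      have h5 : (p : ℤ) ≤ 2 := Int.le_of_dvd (by norm_num) h4
      omega
  · push_cast
    field_simp
  · have hd : p ∣ (2 * k).choose k := by
      have h := hp.dvd_choose_add (show k < p from hkp) (show k < p from hkp)
        (show p ≤ k + k by omega)
      have hkk : k + k = 2 * k := by ring
      rwa [hkk] at h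
    have hdZ : (p : ℤ) ∣ ((2 * k).choose k : ℤ) := by exact_mod_cast hd
    exact pow_dvd_pow_of_dvd hdZ 2

end SunAuxC

open SunAuxC

/-- For a prime `p > 3`,
`∑_{k=1}^{p-1} C(2k,k)^2 / (k^2 * 16^k) ≡ -2 * H_{(p-1)/2}^2 (mod p^2)`,
where `H_n = ∑_{j=1}^n 1/j`. The congruence between rationals means `p^2`
divides the numerator of the difference written in lowest terms. -/
theorem sun_lemma_2_4a (p : ℕ) (hp : p.Prime) (hp3 : 3 < p) :
    (p : ℤ) ^ 2 ∣
      ((∑ k ∈ Finset.Icc 1 (p - 1),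
          ((2 * k).choose k : ℚ) ^ 2 / ((k : ℚ) ^ 2 * 16 ^ k))
        - (-2 * (∑ j ∈ Finset.Icc 1 ((p - 1) / 2), (1 : ℚ) / (j : ℚ)) ^ 2)).num := by
  have hodd : Odd p := hp.odd_of_ne_two (by omega)
  obtain ⟨m0, hm0⟩ := hodd
  set m := (p - 1) / 2 with hm
  have hpm : p = 2 * m + 1 := by omega
  have hm1 : 1 ≤ m := by omega
  apply good_num hp
  set f : ℕ → ℚ := fun k => ((2 * k).choose k : ℚ) ^ 2 / ((k : ℚ) ^ 2 * 16 ^ k) with hf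
  set sfn : ℕ → ℚ :=
    fun k => (-1 : ℚ) ^ k * (m.choose k : ℚ) * ((m + k).choose k : ℚ) / (k : ℚ) ^ 2 with hsfn
  have hIccIoc : ∀ X : ℕ, Finset.Icc 1 X = Finset.Ioc 0 X := by
    intro X; ext t; simp only [Finset.mem_Icc, Finset.mem_Ioc]; omega
  have hsplit : ∑ k ∈ Finset.Icc 1 (p - 1), f k
      = (∑ k ∈ Finset.Icc 1 m, f k) + ∑ k ∈ Finset.Ioc m (p - 1), f k := by
    rw [hIccIoc (p - 1), hIccIoc m]
    exact (Finset.sum_Ioc_consecutive f (by omega) (by omega)).symm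
  have hL2 : ∑ k ∈ Finset.Icc 1 m, sfn k = -2 * (H m) ^ 2 := L2 m
  have hdiff : (∑ k ∈ Finset.Icc 1 (p - 1), f k) - (-2 * (H m) ^ 2)
      = (∑ k ∈ Finset.Icc 1 m, (f k - sfn k)) + ∑ k ∈ Finset.Ioc m (p - 1), f k := by
    rw [hsplit, Finset.sum_sub_distrib, hL2]
    ring
  show Good p ((∑ k ∈ Finset.Icc 1 (p - 1), f k) - (-2 * (H m) ^ 2))
  rw [hdiff]
  refine good_add hp (good_sum hp _ _ ?_) (good_sum hp _ _ ?_)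
  · intro k hk
    obtain ⟨hk1, hk2⟩ := Finset.mem_Icc.mp hk
    exact good_head hp hpm hm1 hk1 hk2
  · intro k hk
    obtain ⟨hk1, hk2⟩ := Finset.mem_Ioc.mp hk
    exact good_tail hp hpm hm1 hk1 hk2
end

section
/- Let p > 3 be a prime. Then the sum over k from 1 to p-1 of binom(2k,k)^2 / (k^3 * 16^k) is congruent to -(4/3)*H_{(p-1)/2}^3 - (2/3)*H_{(p-1)/2}^{(3)} modulo p, where H_n = sum_{j=1}^n 1/j and H_n^{(3)} = sum_{j=1}^n 1/j^3. -/
open Finset Polynomial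


variable {p : ℕ}

/-- `q` is p-integral: its denominator is not divisible by `p`. -/
def PGood (p : ℕ) (q : ℚ) : Prop := ¬ p ∣ q.den

namespace PGood

variable [hpf : Fact p.Prime]

lemma den_ne {q : ℚ} (h : PGood p q) : ((q.den : ZMod p) ≠ 0) := by
  simpa [ZMod.natCast_eq_zero_iff, PGood] using h

lemma of_dvd {q : ℚ} {b : ℕ} (hd : q.den ∣ b) (hb : ¬ p ∣ b) : PGood p q :=
  fun h => hb (h.trans hd)

lemma add {a b : ℚ} (ha : PGood p a) (hb : PGood p b) : PGood p (a + b) := by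
  intro h
  rcases (hpf.out.dvd_mul.mp (h.trans (Rat.add_den_dvd a b))) with h' | h'
  exacts [ha h', hb h']

lemma mul {a b : ℚ} (ha : PGood p a) (hb : PGood p b) : PGood p (a * b) := by
  intro h
  rcases (hpf.out.dvd_mul.mp (h.trans (Rat.mul_den_dvd a b))) with h' | h'
  exacts [ha h', hb h']

lemma neg {a : ℚ} (ha : PGood p a) : PGood p (-a) := by
  simpa [PGood] using ha

lemma sub {a b : ℚ} (ha : PGood p a) (hb : PGood p b) : PGood p (a - b) := by
  rw [sub_eq_add_neg]; exact ha.add hb.neg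

lemma pow {a : ℚ} (ha : PGood p a) (n : ℕ) : PGood p (a ^ n) := by
  intro h
  rw [Rat.den_pow] at h
  exact ha (hpf.out.dvd_of_dvd_pow h)

lemma castAdd {a b : ℚ} (ha : PGood p a) (hb : PGood p b) :
    ((a + b : ℚ) : ZMod p) = (a : ℚ) + (b : ℚ) :=
  Rat.cast_add_of_ne_zero ha.den_ne hb.den_ne

lemma castMul {a b : ℚ} (ha : PGood p a) (hb : PGood p b) :
    ((a * b : ℚ) : ZMod p) = (a : ℚ) * (b : ℚ) :=
  Rat.cast_mul_of_ne_zero ha.den_ne hb.den_ne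

lemma castSub {a b : ℚ} (ha : PGood p a) (hb : PGood p b) :
    ((a - b : ℚ) : ZMod p) = (a : ℚ) - (b : ℚ) :=
  Rat.cast_sub_of_ne_zero ha.den_ne hb.den_ne

lemma castPow {a : ℚ} (ha : PGood p a) (n : ℕ) :
    ((a ^ n : ℚ) : ZMod p) = ((a : ℚ) : ZMod p) ^ n := by
  induction n with
  | zero => simp
  | succ n ih =>
      rw [pow_succ, castMul (ha.pow n) ha, ih, pow_succ]

lemma intCast (n : ℤ) : PGood p (n : ℚ) := by simp [PGood, hpf.out.one_lt.ne']

lemma sum {ι : Type*} {s : Finset ι} {f : ι → ℚ}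
    (h : ∀ i ∈ s, PGood p (f i)) :
    PGood p (∑ i ∈ s, f i) ∧
      ((∑ i ∈ s, f i : ℚ) : ZMod p) = ∑ i ∈ s, ((f i : ℚ) : ZMod p) := by
  classical
  induction s using Finset.cons_induction with
  | empty => exact ⟨by simpa using intCast (p := p) 0, by simp⟩
  | cons a s has ih =>
      obtain ⟨hg, hc⟩ := ih (fun i hi => h i (Finset.mem_cons.mpr (Or.inr hi)))
      have ha := h a (Finset.mem_cons.mpr (Or.inl rfl))
      rw [Finset.sum_cons, Finset.sum_cons, ← hc]
      exact ⟨ha.add hg, ha.castAdd hg⟩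

/-- The key atom: a quotient of naturals with denominator nonzero mod p. -/
lemma natDiv {a b : ℕ} (hb : (b : ZMod p) ≠ 0) :
    PGood p ((a : ℚ) / (b : ℚ)) ∧
      (((a : ℚ) / (b : ℚ) : ℚ) : ZMod p) = (a : ZMod p) / (b : ZMod p) := by
  have hbp : ¬ p ∣ b := by simpa [ZMod.natCast_eq_zero_iff] using hb
  constructor
  · have hdvd : (((a : ℚ) / (b : ℚ)).den : ℤ) ∣ (b : ℤ) := by
      have := Rat.den_dvd (a : ℤ) (b : ℤ)
      rwa [Rat.divInt_eq_div, Int.cast_natCast, Int.cast_natCast] at this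
    exact of_dvd (Int.natCast_dvd_natCast.mp hdvd) hbp
  · have h1 : (((a : ℚ)).den : ZMod p) ≠ 0 := by simp
    have h2 : (((b : ℚ)).num : ZMod p) ≠ 0 := by
      rwa [Rat.num_natCast, Int.cast_natCast]
    rw [Rat.cast_div_of_ne_zero h1 h2, Rat.cast_natCast, Rat.cast_natCast]

/-- Conclusion step: a `PGood` rational that casts to zero has numerator divisible by `p`. -/
lemma num_dvd {q : ℚ} (hg : PGood p q) (h0 : ((q : ℚ) : ZMod p) = 0) :
    (p : ℤ) ∣ q.num := by
  have : ((q.num : ℚ) : ZMod p) = (q : ℚ) * ((q.den : ℚ) : ZMod p) := by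
    rw [← Rat.cast_mul_of_ne_zero hg.den_ne (by simp), Rat.mul_den_eq_num]
  rw [Rat.cast_intCast] at this
  rw [← ZMod.intCast_zmod_eq_zero_iff_dvd, this, h0, zero_mul]

end PGood


-- (2k)! = 2^k * k! * ∏_{i<k} (2i+1)
lemma fact_two_mul (k : ℕ) :
    (2 * k).factorial = 2 ^ k * k.factorial * ∏ i ∈ range k, (2 * i + 1) := by
  induction k with
  | zero => simp
  | succ k ih =>
      have h2 : 2 * (k + 1) = (2 * k + 1) + 1 := by ring
      rw [h2, Nat.factorial_succ, Nat.factorial_succ, ih, prod_range_succ, Nat.factorial_succ]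
      ring

-- descending product: ∏_{i<k}(m-i) * (m-k)! = m!
lemma desc_prod (m : ℕ) : ∀ k ≤ m, (∏ i ∈ range k, (m - i)) * (m - k).factorial = m.factorial := by
  intro k
  induction k with
  | zero => simp
  | succ k ih =>
      intro hk
      have hk' : k ≤ m := Nat.le_of_succ_le hk
      rw [prod_range_succ, ← ih hk']
      have : m - k = (m - (k+1)) + 1 := by omega
      rw [this, Nat.factorial_succ, ← this]
      ring_nf

-- ascending: m! * ∏_{i<k}(m+i+1) = (m+k)!
lemma asc_prod (m k : ℕ) : m.factorial * ∏ i ∈ range k, (m + i + 1) = (m + k).factorial := by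
  induction k with
  | zero => simp
  | succ k ih => rw [prod_range_succ, ← mul_assoc, ih, ← Nat.add_assoc, Nat.factorial_succ]; ring

lemma Icc_one_prod {M : Type*} [CommMonoid M] (n : ℕ) (f : ℕ → M) :
    ∏ j ∈ Icc 1 n, f j = ∏ j ∈ range n, f (j + 1) := by
  induction n with
  | zero => simp
  | succ n ih => rw [prod_Icc_succ_top (by omega), ih, prod_range_succ]

lemma Icc_one_sum {M : Type*} [AddCommMonoid M] (n : ℕ) (f : ℕ → M) :
    ∑ j ∈ Icc 1 n, f j = ∑ j ∈ range n, f (j + 1) := by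
  induction n with
  | zero => simp
  | succ n ih => rw [sum_Icc_succ_top (by omega), ih, sum_range_succ]



section C
variable {p m : ℕ} [hpf : Fact p.Prime] (hm : p = 2 * m + 1)

lemma cast_nonzero {j : ℕ} (h1 : 0 < j) (h2 : j < p) : ((j : ZMod p) ≠ 0) := by
  rw [Ne, ZMod.natCast_eq_zero_iff]
  exact fun h => absurd (Nat.le_of_dvd h1 h) (by omega)

lemma fact_nonzero {k : ℕ} (h : k < p) : ((k.factorial : ZMod p) ≠ 0) := by
  rw [Ne, ZMod.natCast_eq_zero_iff]
  intro hdvd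
  exact absurd ((Nat.Prime.dvd_factorial hpf.out).mp hdvd) (by omega)

include hm in
lemma two_m_cast : (2 * (m : ZMod p) + 1) = 0 := by
  have : ((2 * m + 1 : ℕ) : ZMod p) = 0 := by rw [← hm]; exact ZMod.natCast_self p
  push_cast at this
  linear_combination this

include hm in
lemma desc_prod_cast {k : ℕ} (hk : k ≤ m) :
    (∏ i ∈ range k, (((m - i : ℕ)) : ZMod p)) * ((m - k).factorial : ZMod p)
      = (m.factorial : ZMod p) := by
  have := congrArg (fun n : ℕ => (n : ZMod p)) (desc_prod m k hk)
  push_cast at this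
  simpa using this

include hm in
lemma key1 {k : ℕ} (hk : k ≤ m) :
    (((2 * k).choose k : ℕ) : ZMod p) = (-4 : ZMod p) ^ k * (m.choose k : ℕ) := by
  have hfk : ((k.factorial : ZMod p)) ≠ 0 := fact_nonzero (by omega)
  have hfmk : (((m - k).factorial : ZMod p)) ≠ 0 := fact_nonzero (by omega)
  have h2 := Nat.choose_mul_factorial_mul_factorial (show k ≤ 2*k by omega)
  rw [show 2*k - k = k from by omega] at h2
  have e1 : (((2 * k).choose k : ℕ) : ZMod p) * (k.factorial : ZMod p) * (k.factorial : ZMod p)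
      = (2 : ZMod p) ^ k * (k.factorial : ZMod p)
          * ∏ i ∈ range k, (2 * (i : ZMod p) + 1) := by
    have := congrArg (fun n : ℕ => (n : ZMod p)) (h2.trans (fact_two_mul k))
    push_cast at this
    linear_combination this
  have hodd : ∀ i ∈ range k, (2 * (i : ZMod p) + 1) = -1 * (2 * (((m - i : ℕ)) : ZMod p)) := by
    intro i hi
    rw [mem_range] at hi
    have hc : ((m - i : ℕ) : ZMod p) + (i : ZMod p) = (m : ZMod p) := by
      rw [← Nat.cast_add]; congr 1; omega
    linear_combination (two_m_cast hm) + 2 * hc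
  rw [prod_congr rfl hodd, prod_mul_distrib, prod_mul_distrib, prod_const, prod_const, card_range] at e1
  have e3 : ((m.choose k : ℕ) : ZMod p) * (k.factorial : ZMod p) * ((m - k).factorial : ZMod p)
      = (m.factorial : ZMod p) := by
    have := congrArg (fun n : ℕ => (n : ZMod p))
      (Nat.choose_mul_factorial_mul_factorial hk)
    push_cast at this
    linear_combination this
  apply mul_right_cancel₀ hfk
  apply mul_right_cancel₀ hfk
  apply mul_right_cancel₀ hfmk
  calc (((2 * k).choose k : ℕ) : ZMod p) * ↑k.factorial * ↑k.factorial * ↑(m-k).factorial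
      = (-1:ZMod p)^k * (2:ZMod p)^k * (2:ZMod p)^k * ↑k.factorial * ↑m.factorial := by
        rw [e1, ← desc_prod_cast hm hk]; ring
    _ = (-4 : ZMod p)^k * ↑k.factorial * ↑m.factorial := by
        rw [show ((-4 : ZMod p)) = -1 * 2 * 2 by norm_num, mul_pow, mul_pow]
        try ring
    _ = (-4 : ZMod p) ^ k * ↑(m.choose k) * ↑k.factorial * ↑k.factorial * ↑(m-k).factorial := by
        rw [← e3]; ring

include hm in
lemma key2 {k : ℕ} (hk : k ≤ m) :
    (((m + k).choose k : ℕ) : ZMod p) = (-1 : ZMod p) ^ k * (m.choose k : ℕ) := by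
  have hfk : ((k.factorial : ZMod p)) ≠ 0 := fact_nonzero (by omega)
  have hfm : ((m.factorial : ZMod p)) ≠ 0 := fact_nonzero (by omega)
  have hfmk : (((m - k).factorial : ZMod p)) ≠ 0 := fact_nonzero (by omega)
  have h2 : (m + k).choose k * k.factorial * m.factorial = (m + k).factorial := by
    have := Nat.choose_mul_factorial_mul_factorial (show k ≤ m + k by omega)
    rw [show m + k - k = m from by omega] at this
    linarith [this]
  have e1 : (((m + k).choose k : ℕ) : ZMod p) * (k.factorial : ZMod p) * (m.factorial : ZMod p)
      = (m.factorial : ZMod p) * ∏ i ∈ range k, ((m : ZMod p) + (i : ZMod p) + 1) := by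
    have := congrArg (fun n : ℕ => (n : ZMod p)) (h2.trans (asc_prod m k).symm)
    push_cast at this
    linear_combination this
  have hneg : ∀ i ∈ range k, ((m : ZMod p) + (i : ZMod p) + 1)
      = -1 * (((m - i : ℕ)) : ZMod p) := by
    intro i hi
    rw [mem_range] at hi
    have hc : ((m - i : ℕ) : ZMod p) + (i : ZMod p) = (m : ZMod p) := by
      rw [← Nat.cast_add]; congr 1; omega
    linear_combination (two_m_cast hm) + hc
  rw [prod_congr rfl hneg, prod_mul_distrib, prod_const, card_range] at e1
  have e3 : ((m.choose k : ℕ) : ZMod p) * (k.factorial : ZMod p) * ((m - k).factorial : ZMod p)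
      = (m.factorial : ZMod p) := by
    have := congrArg (fun n : ℕ => (n : ZMod p))
      (Nat.choose_mul_factorial_mul_factorial hk)
    push_cast at this
    linear_combination this
  apply mul_right_cancel₀ hfk
  apply mul_right_cancel₀ hfm
  apply mul_right_cancel₀ hfmk
  calc (((m + k).choose k : ℕ) : ZMod p) * ↑k.factorial * ↑m.factorial * ↑(m-k).factorial
      = (↑m.factorial * (-1:ZMod p)^k)
          * ((∏ i ∈ range k, (((m - i : ℕ)) : ZMod p)) * ↑(m-k).factorial) := by
        rw [e1]; ring
    _ = (-1:ZMod p)^k * ↑m.factorial * ↑m.factorial := by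
        rw [desc_prod_cast hm hk]; ring
    _ = (-1 : ZMod p) ^ k * ↑(m.choose k) * ↑k.factorial * ↑m.factorial * ↑(m-k).factorial := by
        rw [← e3]; ring

include hm in
lemma central_vanish {k : ℕ} (h1 : m < k) (h2 : k ≤ 2 * m) :
    (((2 * k).choose k : ℕ) : ZMod p) = 0 := by
  rw [ZMod.natCast_eq_zero_iff]
  have h2k := Nat.choose_mul_factorial_mul_factorial (show k ≤ 2*k by omega)
  rw [show 2*k - k = k from by omega] at h2k
  have hdvd : p ∣ (2*k).factorial := hpf.out.dvd_factorial.mpr (by omega)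
  rw [← h2k] at hdvd
  have hnk : ¬ p ∣ k.factorial := fun h =>
    absurd ((Nat.Prime.dvd_factorial hpf.out).mp h) (by omega)
  rcases hpf.out.dvd_mul.mp hdvd with h | h
  · rcases hpf.out.dvd_mul.mp h with h | h
    · exact h
    · exact absurd h hnk
  · exact absurd h hnk

end C



section D
variable {p m : ℕ} [hpf : Fact p.Prime] (hm : p = 2 * m + 1)

local notation "K" => ZMod p

lemma fact_nonzero' {k : ℕ} (h : k < p) : ((k.factorial : K) ≠ 0) := by
  rw [Ne, ZMod.natCast_eq_zero_iff]
  intro hdvd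
  exact absurd ((Nat.Prime.dvd_factorial hpf.out).mp hdvd) (by omega)

/-- c_k as a natural number -/
def cc (m k : ℕ) : ℕ := m.choose k * (m + k).choose k

include hm in
lemma cast_inj_on {i j : ℕ} (hi : i ≤ 2 * m) (hj : j ≤ 2 * m) (h : (i : K) = (j : K)) :
    i = j := by
  rw [ZMod.natCast_eq_natCast_iff] at h
  unfold Nat.ModEq at h
  rwa [Nat.mod_eq_of_lt (by omega), Nat.mod_eq_of_lt (by omega)] at h

lemma desc_prod_int (i : ℕ) :
    ∏ j ∈ range i, ((j : ℤ) - (i : ℤ)) = (-1) ^ i * (i.factorial : ℤ) := by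
  rw [← prod_range_reflect]
  have h : ∀ j ∈ range i, ((i - 1 - j : ℕ) : ℤ) - (i : ℤ) = -1 * ((j : ℤ) + 1) := by
    intro j hj
    rw [mem_range] at hj
    have h0 : ((i - 1 - j : ℕ) : ℤ) = (i : ℤ) - 1 - j := by
      have h1 : i - 1 - j + (j + 1) = i := by omega
      have h2 := congrArg (fun n : ℕ => (n : ℤ)) h1
      push_cast at h2
      linarith
    rw [h0]; ring
  rw [prod_congr rfl h, prod_mul_distrib, prod_const, card_range]
  congr 1
  exact_mod_cast congrArg (fun n : ℕ => (n : ℤ)) (Finset.prod_range_add_one_eq_factorial i)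

lemma asc_prod_nat (i : ℕ) : ∀ m, i ≤ m → ∏ j ∈ Icc (i + 1) m, (j - i) = (m - i).factorial := by
  intro m
  induction m with
  | zero => intro h; interval_cases i; simp
  | succ m ih =>
      intro h
      rcases Nat.lt_or_ge m i with h' | h'
      · have : i = m + 1 := by omega
        subst this
        rw [show Icc (m + 1 + 1) (m + 1) = ∅ from Icc_eq_empty (by omega)]
        simp
      · rw [prod_Icc_succ_top (by omega), ih h', show m + 1 - i = (m - i) + 1 from by omega,
          Nat.factorial_succ]
        ring

lemma cc_fact (m i : ℕ) (h : i ≤ m) :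
    cc m i * (i.factorial * (m - i).factorial * i.factorial) = (m + i).factorial := by
  have h1 : m.choose i * i.factorial * (m - i).factorial = m.factorial :=
    Nat.choose_mul_factorial_mul_factorial h
  have h2 : (m + i).choose i * i.factorial * m.factorial = (m + i).factorial := by
    have := Nat.choose_mul_factorial_mul_factorial (show i ≤ m + i by omega)
    rwa [show m + i - i = m from by omega] at this
  calc cc m i * (i.factorial * (m - i).factorial * i.factorial)
      = (m + i).choose i * i.factorial * (m.choose i * i.factorial * (m - i).factorial) := by
        unfold cc; ring
    _ = (m + i).choose i * i.factorial * m.factorial := by rw [h1]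
    _ = (m + i).factorial := h2

include hm in
lemma poly_id :
    (∑ k ∈ range (m + 1), C ((-1 : K) ^ k * (cc m k : K)) *
        ∏ j ∈ (range (m + 1)).erase k, (X + C (j : K)))
      = ∏ j ∈ Icc 1 m, (C (j : K) - X) := by
  apply Polynomial.eq_of_degrees_lt_of_eval_index_eq (v := fun i : ℕ => -(i : K)) (range (m + 1))
  · intro i hi j hj hij
    simp only [coe_range, Set.mem_Iio] at hi hj
    exact cast_inj_on hm (by omega) (by omega) (neg_inj.mp hij)
  · rw [card_range]
    refine lt_of_le_of_lt (degree_sum_le _ _) ?_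
    rw [Finset.sup_lt_iff (by exact_mod_cast WithBot.bot_lt_coe (m + 1))]
    intro k hk
    refine lt_of_le_of_lt (degree_mul_le _ _) ?_
    have h2 : degree (∏ j ∈ (range (m + 1)).erase k, (X + C (j : K))) ≤ (m : WithBot ℕ) := by
      refine le_trans (degree_prod_le _ _) ?_
      refine le_trans (Finset.sum_le_sum (fun j _ => le_of_eq (degree_X_add_C (j : K)))) ?_
      rw [sum_const, card_erase_of_mem hk, card_range]
      simp
    calc degree (C ((-1 : K) ^ k * (cc m k : K))) +
          degree (∏ j ∈ (range (m + 1)).erase k, (X + C (j : K)))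
        ≤ 0 + (m : WithBot ℕ) := add_le_add degree_C_le h2
      _ < ((m + 1 : ℕ) : WithBot ℕ) := by
          rw [zero_add]
          exact_mod_cast WithBot.coe_lt_coe.mpr (Nat.lt_succ_self m)
  · rw [card_range]
    refine lt_of_le_of_lt (degree_prod_le _ _) ?_
    refine lt_of_le_of_lt (Finset.sum_le_sum (fun j _ => show degree (C (j : K) - X) ≤ 1 from ?_)) ?_
    · rw [show C ((j : K)) - X = -(X - C (j : K)) from by ring, degree_neg, degree_X_sub_C]
    · rw [sum_const, Nat.card_Icc]
      simp only [Nat.add_sub_cancel, nsmul_eq_mul, mul_one]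
      exact_mod_cast WithBot.coe_lt_coe.mpr (Nat.lt_succ_self m)
  · intro i hi
    rw [mem_range] at hi
    have him : i ≤ m := by omega
    rw [eval_finset_sum]
    rw [Finset.sum_eq_single_of_mem i (mem_range.mpr hi) ?side]
    case side =>
      intro k hk hki
      rw [eval_mul]
      apply mul_eq_zero_of_right
      rw [eval_prod]
      refine prod_eq_zero (Finset.mem_erase.mpr ⟨fun h => hki h.symm, mem_range.mpr hi⟩) ?_
      simp
    have hsplit : (range (m + 1)).erase i = (range i) ∪ (Icc (i + 1) m) := by
      ext j
      simp only [mem_erase, mem_range, mem_union, mem_Icc]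
      omega
    have hdisj : Disjoint (range i) (Icc (i + 1) m) := by
      rw [Finset.disjoint_left]
      intro j hj hj'
      rw [mem_range] at hj
      rw [mem_Icc] at hj'
      omega
    rw [eval_mul, eval_C, eval_prod, hsplit, prod_union hdisj]
    -- part A
    have hA : ∏ j ∈ range i, eval (-(i : K)) (X + C (j : K)) = (-1) ^ i * (i.factorial : K) := by
      have hc := congrArg (fun n : ℤ => (n : K)) (desc_prod_int i)
      push_cast at hc
      rw [← hc]
      refine prod_congr rfl fun j _ => ?_
      simp only [eval_add, eval_X, eval_C]
      ring
    -- part B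
    have hB : ∏ j ∈ Icc (i + 1) m, eval (-(i : K)) (X + C (j : K))
        = (((m - i).factorial : ℕ) : K) := by
      rw [← asc_prod_nat i m him, Nat.cast_prod]
      refine prod_congr rfl fun j hj => ?_
      rw [mem_Icc] at hj
      simp only [eval_add, eval_X, eval_C]
      have : ((j - i : ℕ) : K) + (i : K) = (j : K) := by
        rw [← Nat.cast_add]; congr 1; omega
      linear_combination -this
    -- RHS
    have hQn : (∏ j ∈ Icc 1 m, (j + i)) * i.factorial = (m + i).factorial := by
      rw [Icc_one_prod m (fun j => j + i)]
      calc (∏ t ∈ range m, (t + 1 + i)) * i.factorial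
          = i.factorial * ∏ t ∈ range m, (i + t + 1) := by
            rw [mul_comm]; congr 1; exact prod_congr rfl fun t _ => by omega
        _ = (i + m).factorial := asc_prod i m
        _ = (m + i).factorial := by rw [Nat.add_comm]
    have hQ : eval (-(i : K)) (∏ j ∈ Icc 1 m, (C (j : K) - X))
        = ((∏ j ∈ Icc 1 m, (j + i) : ℕ) : K) := by
      rw [eval_prod, Nat.cast_prod]
      refine prod_congr rfl fun j _ => ?_
      simp only [eval_sub, eval_C, eval_X]
      push_cast
      ring
    rw [hA, hB, hQ]
    have hfi : ((i.factorial : K)) ≠ 0 := fact_nonzero' (by omega)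
    apply mul_right_cancel₀ hfi
    have hccf := congrArg (fun n : ℕ => (n : K)) (cc_fact m i him)
    push_cast at hccf
    have hQn' := congrArg (fun n : ℕ => (n : K)) hQn
    simp only [Nat.cast_mul] at hQn'
    have hsq : ((-1 : K)) ^ i * (-1) ^ i = 1 := by
      rw [← mul_pow]; norm_num
    linear_combination hccf - hQn' +
      ((cc m i : K) * (i.factorial : K) * ((m - i).factorial : K) * (i.factorial : K)) * hsq

end D


section E
variable {F : Type*} [Field F]

/-- cubic polynomial with given coefficients -/
noncomputable def cub (a b c d : F) : Polynomial F := C a + C b * X + C c * X ^ 2 + C d * X ^ 3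

noncomputable def II (F : Type*) [Field F] : Ideal (Polynomial F) := Ideal.span {(X : Polynomial F) ^ 4}

noncomputable def phi (F : Type*) [Field F] : Polynomial F →+* (Polynomial F ⧸ II F) :=
  Ideal.Quotient.mk (II F)

lemma phi_eq {f g : Polynomial F} (h : (X : Polynomial F) ^ 4 ∣ f - g) : phi F f = phi F g :=
  Ideal.Quotient.eq.mpr (Ideal.mem_span_singleton.mpr h)

lemma phi_inj3 {a b c d a' b' c' d' : F}
    (h : phi F (cub a b c d) = phi F (cub a' b' c' d')) : d = d' := by
  have h2 : (X : Polynomial F) ^ 4 ∣ (cub a b c d - cub a' b' c' d') :=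
    Ideal.mem_span_singleton.mp (Ideal.Quotient.eq.mp h)
  rw [Polynomial.X_pow_dvd_iff] at h2
  have h3 := h2 3 (by omega)
  simp only [cub, coeff_sub, coeff_add, coeff_C, coeff_C_mul, coeff_X_pow, coeff_X] at h3
  norm_num at h3
  exact sub_eq_zero.mp h3

lemma cub_mul (a b c d e f g h : F) :
    phi F (cub a b c d) * phi F (cub e f g h)
      = phi F (cub (a * e) (a * f + b * e) (a * g + b * f + c * e)
          (a * h + b * g + c * f + d * e)) := by
  rw [← map_mul]
  apply phi_eq
  exact ⟨C (b * h + c * g + d * f) + C (c * h + d * g) * X + C (d * h) * X ^ 2, by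
    simp only [cub, map_add, map_mul]
    ring⟩

lemma cub_one : (cub (1 : F) 0 0 0) = 1 := by simp [cub]

lemma cub_add (a b c d a' b' c' d' : F) :
    cub a b c d + cub a' b' c' d' = cub (a + a') (b + b') (c + c') (d + d') := by
  simp only [cub, map_add]; ring

/-- u z : the truncated inverse of X + C t when t * z = 1 -/
noncomputable def uu (z : F) : Polynomial F := cub z (-(z ^ 2)) (z ^ 3) (-(z ^ 4))

lemma unit_mul {t z : F} (hz : t * z = 1) : phi F (X + C t) * phi F (uu z) = 1 := by
  rw [← map_mul, ← map_one (phi F)]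
  apply phi_eq
  refine ⟨C (-(z ^ 4)), ?_⟩
  have hC : C t * C z = 1 := by rw [← map_mul, hz, map_one]
  simp only [uu, cub, map_neg, map_pow]
  linear_combination (1 - C z * X + C z ^ 2 * X ^ 2 - C z ^ 3 * X ^ 3) * hC

lemma w_mul {t z : F} (hz : t * z = 1) :
    phi F (C t - X) * phi F (uu z) = phi F (cub 1 (-2 * z) (2 * z ^ 2) (-2 * z ^ 3)) := by
  rw [← map_mul]
  apply phi_eq
  refine ⟨C (z ^ 4), ?_⟩
  have hC : C t * C z = 1 := by rw [← map_mul, hz, map_one]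
  simp only [uu, cub, map_neg, map_pow, map_mul, map_ofNat, map_one]
  linear_combination (1 - C z * X + C z ^ 2 * X ^ 2 - C z ^ 3 * X ^ 3) * hC

lemma x_mul (a z : F) :
    phi F (C a * (X * uu z)) = phi F (cub 0 (a * z) (-(a * z ^ 2)) (a * z ^ 3)) := by
  apply phi_eq
  refine ⟨C (-(a * z ^ 4)), ?_⟩
  simp only [uu, cub, map_neg, map_pow, map_mul, map_zero]
  ring

lemma cub_sum {ι : Type*} (s : Finset ι) (α β γ : ι → F) :
    ∑ k ∈ s, cub 0 (α k) (β k) (γ k) = cub 0 (∑ k ∈ s, α k) (∑ k ∈ s, β k) (∑ k ∈ s, γ k) := by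
  classical
  induction s using Finset.cons_induction with
  | empty => simp [cub]
  | cons a s has ih =>
      rw [Finset.sum_cons, Finset.sum_cons, Finset.sum_cons, Finset.sum_cons, ih, cub_add]
      norm_num

lemma w_prod (h3 : (3 : F) ≠ 0) {ι : Type*} (s : Finset ι) (z : ι → F) :
    ∏ j ∈ s, phi F (cub 1 (-2 * z j) (2 * z j ^ 2) (-2 * z j ^ 3))
      = phi F (cub 1 (-2 * ∑ j ∈ s, z j) (2 * (∑ j ∈ s, z j) ^ 2)
          (-(4 / 3) * (∑ j ∈ s, z j) ^ 3 - (2 / 3) * ∑ j ∈ s, z j ^ 3)) := by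
  classical
  induction s using Finset.cons_induction with
  | empty => norm_num [cub_one, map_one]
  | cons a s has ih =>
      rw [Finset.prod_cons, ih, cub_mul, Finset.sum_cons, Finset.sum_cons]
      refine congrArg (phi F) ?_
      congr 1 <;> try ring
      have h33 : (3 : F)⁻¹ * 3 = 1 := inv_mul_cancel₀ h3
      linear_combination (4 * z a * (∑ j ∈ s, z j) ^ 2 + 4 * z a ^ 2 * (∑ j ∈ s, z j)
        + 2 * z a ^ 3) * h33

end E

section F
variable {p m : ℕ} [hpf : Fact p.Prime] (hm : p = 2 * m + 1) (hp3 : 3 < p)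

local notation "K" => ZMod p

include hm hp3 in
lemma main_extract :
    ∑ k ∈ Icc 1 m, (-1 : K) ^ k * (cc m k : K) * ((k : K)⁻¹) ^ 3
      = -(4 / 3) * (∑ j ∈ Icc 1 m, ((j : K))⁻¹) ^ 3
          - (2 / 3) * ∑ j ∈ Icc 1 m, ((j : K)⁻¹) ^ 3 := by
  classical
  set z : ℕ → K := fun j => ((j : K))⁻¹ with hzdef
  have hjne : ∀ j ∈ Icc 1 m, ((j : K)) ≠ 0 := by
    intro j hj
    rw [mem_Icc] at hj
    exact cast_nonzero (by omega) (by omega)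
  have hz : ∀ j ∈ Icc 1 m, (j : K) * z j = 1 := fun j hj => mul_inv_cancel₀ (hjne j hj)
  have h3 : (3 : K) ≠ 0 := by
    have := cast_nonzero (p := p) (j := 3) (by omega) (by omega)
    simpa using this
  -- abbreviations
  set D : Polynomial K := ∏ j ∈ Icc 1 m, (X + C (j : K)) with hD
  set E : Polynomial K := ∏ j ∈ Icc 1 m, uu (z j) with hE
  set a : ℕ → K := fun k => (-1 : K) ^ k * (cc m k : K) with ha
  -- the polynomial identity
  have hpoly := poly_id hm
  -- decompose P
  have hrange : range (m + 1) = insert 0 (Icc 1 m) := by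
    ext j; simp only [mem_range, mem_insert, mem_Icc]; omega
  have h0not : (0 : ℕ) ∉ Icc 1 m := by simp
  have herase0 : (range (m + 1)).erase 0 = Icc 1 m := by
    ext j; simp only [mem_erase, mem_range, mem_Icc]; omega
  have hPdecomp : (∑ k ∈ range (m + 1), C ((-1 : K) ^ k * (cc m k : K)) *
        ∏ j ∈ (range (m + 1)).erase k, (X + C (j : K)))
      = D + ∑ k ∈ Icc 1 m, C (a k) * (X * ∏ j ∈ (Icc 1 m).erase k, (X + C (j : K))) := by
    rw [hrange, sum_insert h0not]
    congr 1
    · simp only [Finset.erase_insert h0not, show cc m 0 = 1 from by simp [cc], Nat.cast_one,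
        pow_zero, one_mul, map_one, hD]
    · refine Finset.sum_congr rfl fun k hk => ?_
      rw [mem_Icc] at hk
      have hset : (insert 0 (Icc 1 m)).erase k = insert 0 ((Icc 1 m).erase k) := by
        ext j; simp only [mem_erase, mem_insert, mem_Icc]; omega
      rw [hset, prod_insert (by simp), Nat.cast_zero, map_zero, add_zero, ha]
  -- pass to the quotient
  have hQ : phi K (∏ j ∈ Icc 1 m, (C (j : K) - X))
      = phi K D + ∑ k ∈ Icc 1 m, phi K (C (a k)) *
          (phi K X * phi K (∏ j ∈ (Icc 1 m).erase k, (X + C (j : K)))) := by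
    rw [← hpoly, hPdecomp, map_add, map_sum]
    congr 1
  -- units
  have hunit : ∀ j ∈ Icc 1 m, phi K (X + C (j : K)) * phi K (uu (z j)) = 1 :=
    fun j hj => unit_mul (hz j hj)
  have hDE : phi K D * phi K E = 1 := by
    rw [← map_mul, hD, hE, ← prod_mul_distrib, map_prod]
    exact (Finset.prod_congr rfl (fun j hj => by rw [map_mul]; exact hunit j hj)).trans
      prod_const_one
  -- rewrite each D_k term
  have hDk : ∀ k ∈ Icc 1 m, phi K X * phi K (∏ j ∈ (Icc 1 m).erase k, (X + C (j : K)))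
      = phi K (X * uu (z k)) * phi K D := by
    intro k hk
    have hmpe : (X + C (k : K)) * ∏ j ∈ (Icc 1 m).erase k, (X + C (j : K)) = D := by
      rw [hD]; exact Finset.mul_prod_erase (Icc 1 m) (fun j => X + C (j : K)) hk
    rw [map_mul (phi K) X (uu (z k)), ← hmpe,
      map_mul (phi K) (X + C (k : K)) (∏ j ∈ (Icc 1 m).erase k, (X + C (j : K)))]
    linear_combination (-(phi K X * phi K (∏ j ∈ (Icc 1 m).erase k, (X + C (j : K))))) *
      (hunit k hk)
  -- multiply by E
  have hQE : phi K (∏ j ∈ Icc 1 m, (C (j : K) - X)) * phi K E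
      = 1 + ∑ k ∈ Icc 1 m, phi K (C (a k) * (X * uu (z k))) := by
    rw [hQ, add_mul, hDE, sum_mul]
    refine congrArg (fun s => 1 + s) ?_
    refine Finset.sum_congr rfl fun k hk => ?_
    rw [hDk k hk, map_mul (phi K) (C (a k)) (X * uu (z k))]
    calc phi K (C (a k)) * (phi K (X * uu (z k)) * phi K D) * phi K E
        = phi K (C (a k)) * phi K (X * uu (z k)) * (phi K D * phi K E) := by ring
      _ = phi K (C (a k)) * phi K (X * uu (z k)) := by rw [hDE, mul_one]
  -- left side is the product of w's
  have hLHS : phi K (∏ j ∈ Icc 1 m, (C (j : K) - X)) * phi K E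
      = phi K (cub 1 (-2 * ∑ j ∈ Icc 1 m, z j) (2 * (∑ j ∈ Icc 1 m, z j) ^ 2)
          (-(4 / 3) * (∑ j ∈ Icc 1 m, z j) ^ 3 - (2 / 3) * ∑ j ∈ Icc 1 m, z j ^ 3)) := by
    rw [← map_mul, hE, ← prod_mul_distrib, map_prod]
    exact (Finset.prod_congr rfl (fun j hj => by rw [map_mul]; exact w_mul (hz j hj))).trans
      (w_prod h3 _ _)
  -- right side is a single cub
  have hRHS : (1 : Polynomial K ⧸ II K) + ∑ k ∈ Icc 1 m, phi K (C (a k) * (X * uu (z k)))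
      = phi K (cub 1 (∑ k ∈ Icc 1 m, a k * z k) (∑ k ∈ Icc 1 m, -(a k * z k ^ 2))
          (∑ k ∈ Icc 1 m, a k * z k ^ 3)) := by
    rw [Finset.sum_congr rfl (fun k hk => x_mul (a k) (z k)), ← map_sum, cub_sum]
    rw [show (1 : Polynomial K ⧸ II K) = phi K (cub 1 0 0 0) from by rw [cub_one, map_one]]
    rw [← map_add, cub_add]
    norm_num
  -- extract the third coefficient
  have hfinal := phi_inj3 ((hLHS.symm.trans hQE).trans hRHS)
  rw [hfinal]

include hm hp3 in
lemma Ksum :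
    ∑ k ∈ Icc 1 (p - 1), ((((2 * k).choose k) ^ 2 : ℕ) : K) / (((k ^ 3 * 16 ^ k : ℕ)) : K)
      = -(4 / 3) * (∑ j ∈ Icc 1 m, ((j : K))⁻¹) ^ 3
          - (2 / 3) * ∑ j ∈ Icc 1 m, ((j : K)⁻¹) ^ 3 := by
  have hp1 : p - 1 = 2 * m := by omega
  have hsplit : Icc 1 (p - 1) = Icc 1 m ∪ Icc (m + 1) (2 * m) := by
    rw [hp1]; ext j; simp only [mem_Icc, mem_union]; omega
  have hdisj : Disjoint (Icc 1 m) (Icc (m + 1) (2 * m)) := by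
    rw [Finset.disjoint_left]; intro j hj hj'
    rw [mem_Icc] at hj hj'; omega
  rw [hsplit, sum_union hdisj]
  have hzero : ∑ k ∈ Icc (m + 1) (2 * m),
      ((((2 * k).choose k) ^ 2 : ℕ) : K) / (((k ^ 3 * 16 ^ k : ℕ)) : K) = 0 := by
    refine Finset.sum_eq_zero fun k hk => ?_
    rw [mem_Icc] at hk
    have h0 : (((2 * k).choose k : ℕ) : K) = 0 := central_vanish hm hk.1 hk.2
    rw [Nat.cast_pow, h0]
    norm_num
  rw [hzero, add_zero]
  rw [← main_extract hm hp3]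
  refine Finset.sum_congr rfl fun k hk => ?_
  rw [mem_Icc] at hk
  have hkne : ((k : K)) ≠ 0 := cast_nonzero (by omega) (by omega)
  have h2ne : ((2 : K)) ≠ 0 := by
    have := cast_nonzero (p := p) (j := 2) (by omega) (by omega)
    simpa using this
  have h16 : ((16 : K)) ≠ 0 := by
    intro h
    apply h2ne
    have : ((2 : K)) ^ 4 = 0 := by rw [show ((2:K))^4 = 16 from by norm_num, h]
    exact pow_eq_zero_iff (by omega) |>.mp this
  have hc1 := key1 hm hk.2
  have hc2 := key2 hm hk.2
  have hcc : ((cc m k : ℕ) : K) = (m.choose k : K) * ((-1 : K) ^ k * (m.choose k : K)) := by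
    rw [cc, Nat.cast_mul, hc2]
  push_cast
  rw [hc1, hcc]
  have hs : ((-1 : K)) ^ k * (-1) ^ k = 1 := by rw [← mul_pow]; norm_num
  have h4 : ((-4 : K)) ^ k * (-4) ^ k = 16 ^ k := by rw [← mul_pow]; norm_num
  have hk3 : ((k : K)) ^ 3 * ((k : K)⁻¹) ^ 3 = 1 := by
    rw [← mul_pow, mul_inv_cancel₀ hkne, one_pow]
  rw [div_eq_iff (by
    refine mul_ne_zero (pow_ne_zero _ hkne) (pow_ne_zero _ h16))]
  linear_combination ((m.choose k : K)) ^ 2 * h4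
    - (16 : K) ^ k * ((m.choose k : K)) ^ 2 * (((k : K))⁻¹) ^ 3 * ((k : K)) ^ 3 * hs
    - (16 : K) ^ k * ((m.choose k : K)) ^ 2 * hk3

end F

/-- For a prime `p > 3`,
`∑_{k=1}^{p-1} C(2k,k)^2 / (k^3 * 16^k)
  ≡ -(4/3)*H_{(p-1)/2}^3 - (2/3)*H_{(p-1)/2}^{(3)} (mod p)`,
where `H_n = ∑_{j=1}^n 1/j` and `H_n^{(3)} = ∑_{j=1}^n 1/j^3`. The congruence
between rationals means `p` divides the numerator of the difference in lowest terms. -/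
theorem sun_lemma_2_4b (p : ℕ) (hp : p.Prime) (hp3 : 3 < p) :
    (p : ℤ) ∣
      ((∑ k ∈ Finset.Icc 1 (p - 1),
          ((2 * k).choose k : ℚ) ^ 2 / ((k : ℚ) ^ 3 * 16 ^ k))
        - (-(4 / 3) * (∑ j ∈ Finset.Icc 1 ((p - 1) / 2), (1 : ℚ) / (j : ℚ)) ^ 3
            - (2 / 3) * (∑ j ∈ Finset.Icc 1 ((p - 1) / 2), (1 : ℚ) / (j : ℚ) ^ 3))).num := by
  haveI hpf : Fact p.Prime := ⟨hp⟩
  have hodd : p % 2 = 1 := Nat.odd_iff.mp (hp.odd_of_ne_two (by omega))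
  set m := (p - 1) / 2 with hmdef
  have hm : p = 2 * m + 1 := by omega
  -- rewrite the left sum termwise into `natDiv` atoms
  have e1 : (∑ k ∈ Finset.Icc 1 (p - 1), ((2 * k).choose k : ℚ) ^ 2 / ((k : ℚ) ^ 3 * 16 ^ k))
      = ∑ k ∈ Finset.Icc 1 (p - 1),
          (((((2 * k).choose k) ^ 2 : ℕ)) : ℚ) / (((k ^ 3 * 16 ^ k : ℕ)) : ℚ) :=
    Finset.sum_congr rfl fun k hk => by push_cast; ring
  have hdenL : ∀ k ∈ Finset.Icc 1 (p - 1), (((k ^ 3 * 16 ^ k : ℕ)) : ZMod p) ≠ 0 := by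
    intro k hk
    rw [mem_Icc] at hk
    rw [Ne, ZMod.natCast_eq_zero_iff]
    intro h
    rcases hp.dvd_mul.mp h with h' | h'
    · have := hp.dvd_of_dvd_pow h'
      have := Nat.le_of_dvd (by omega) this
      omega
    · have h2 : p ∣ 2 ^ (4 * k) := by
        rwa [show (16 : ℕ) = 2 ^ 4 from rfl, ← pow_mul] at h'
      have := hp.dvd_of_dvd_pow h2
      have := Nat.le_of_dvd (by omega) this
      omega
  -- rewrite the harmonic sums termwise
  have hj_ne : ∀ j ∈ Finset.Icc 1 m, ((j : ZMod p)) ≠ 0 := by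
    intro j hj
    rw [mem_Icc] at hj
    exact cast_nonzero (by omega) (by omega)
  have hjp_ne : ∀ j ∈ Finset.Icc 1 m, (((j ^ 3 : ℕ)) : ZMod p) ≠ 0 := by
    intro j hj
    have := hj_ne j hj
    rw [Nat.cast_pow]
    exact pow_ne_zero _ this
  have e2 : (∑ j ∈ Finset.Icc 1 m, (1 : ℚ) / (j : ℚ))
      = ∑ j ∈ Finset.Icc 1 m, (((1 : ℕ)) : ℚ) / ((j : ℕ) : ℚ) := by
    refine Finset.sum_congr rfl fun j hj => by norm_num
  have e3 : (∑ j ∈ Finset.Icc 1 m, (1 : ℚ) / (j : ℚ) ^ 3)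
      = ∑ j ∈ Finset.Icc 1 m, (((1 : ℕ)) : ℚ) / (((j ^ 3 : ℕ)) : ℚ) := by
    refine Finset.sum_congr rfl fun j hj => by push_cast; ring
  have e43 : ((4 : ℚ) / 3) = (((4 : ℕ)) : ℚ) / (((3 : ℕ)) : ℚ) := by norm_num
  have e23 : ((2 : ℚ) / 3) = (((2 : ℕ)) : ℚ) / (((3 : ℕ)) : ℚ) := by norm_num
  have h3K : (((3 : ℕ)) : ZMod p) ≠ 0 := cast_nonzero (by omega) (by omega)
  -- goodness and casts
  have hgoodL := PGood.sum (p := p) (s := Finset.Icc 1 (p - 1))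
    (f := fun k => (((((2 * k).choose k) ^ 2 : ℕ)) : ℚ) / (((k ^ 3 * 16 ^ k : ℕ)) : ℚ))
    (fun k hk => (PGood.natDiv (hdenL k hk)).1)
  have hgoodH := PGood.sum (p := p) (s := Finset.Icc 1 m)
    (f := fun j => (((1 : ℕ)) : ℚ) / ((j : ℕ) : ℚ))
    (fun j hj => (PGood.natDiv (by simpa using hj_ne j hj)).1)
  have hgoodH3 := PGood.sum (p := p) (s := Finset.Icc 1 m)
    (f := fun j => (((1 : ℕ)) : ℚ) / (((j ^ 3 : ℕ)) : ℚ))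
    (fun j hj => (PGood.natDiv (hjp_ne j hj)).1)
  have hgood43 : PGood p ((4 : ℚ) / 3) := by
    rw [e43]; exact (PGood.natDiv h3K).1
  have hgood23 : PGood p ((2 : ℚ) / 3) := by
    rw [e23]; exact (PGood.natDiv h3K).1
  have hgL : PGood p
      (∑ k ∈ Finset.Icc 1 (p - 1), ((2 * k).choose k : ℚ) ^ 2 / ((k : ℚ) ^ 3 * 16 ^ k)) := by
    rw [e1]; exact hgoodL.1
  have hgH : PGood p (∑ j ∈ Finset.Icc 1 m, (1 : ℚ) / (j : ℚ)) := by
    rw [e2]; exact hgoodH.1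
  have hgH3 : PGood p (∑ j ∈ Finset.Icc 1 m, (1 : ℚ) / (j : ℚ) ^ 3) := by
    rw [e3]; exact hgoodH3.1
  have hgR : PGood p (-(4 / 3) * (∑ j ∈ Finset.Icc 1 m, (1 : ℚ) / (j : ℚ)) ^ 3
      - 2 / 3 * (∑ j ∈ Finset.Icc 1 m, (1 : ℚ) / (j : ℚ) ^ 3)) :=
    PGood.sub (PGood.mul hgood43.neg (hgH.pow 3)) (PGood.mul hgood23 hgH3)
  apply PGood.num_dvd (PGood.sub hgL hgR)
  -- now compute the cast
  rw [PGood.castSub hgL hgR]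
  have hcL : (((∑ k ∈ Finset.Icc 1 (p - 1),
        ((2 * k).choose k : ℚ) ^ 2 / ((k : ℚ) ^ 3 * 16 ^ k) : ℚ)) : ZMod p)
      = ∑ k ∈ Finset.Icc 1 (p - 1),
          (((((2 * k).choose k) ^ 2 : ℕ)) : ZMod p) / (((k ^ 3 * 16 ^ k : ℕ)) : ZMod p) := by
    rw [e1, hgoodL.2]
    exact Finset.sum_congr rfl fun k hk => (PGood.natDiv (hdenL k hk)).2
  have hcH : (((∑ j ∈ Finset.Icc 1 m, (1 : ℚ) / (j : ℚ) : ℚ)) : ZMod p)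
      = ∑ j ∈ Finset.Icc 1 m, ((j : ZMod p))⁻¹ := by
    rw [e2, hgoodH.2]
    refine Finset.sum_congr rfl fun j hj => ?_
    rw [(PGood.natDiv (by simpa using hj_ne j hj)).2]
    rw [Nat.cast_one, one_div]
  have hcH3 : (((∑ j ∈ Finset.Icc 1 m, (1 : ℚ) / (j : ℚ) ^ 3 : ℚ)) : ZMod p)
      = ∑ j ∈ Finset.Icc 1 m, ((j : ZMod p)⁻¹) ^ 3 := by
    rw [e3, hgoodH3.2]
    refine Finset.sum_congr rfl fun j hj => ?_
    rw [(PGood.natDiv (hjp_ne j hj)).2]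
    rw [Nat.cast_one, Nat.cast_pow, one_div, inv_pow]
  have hcR : ((-(4 / 3) * (∑ j ∈ Finset.Icc 1 m, (1 : ℚ) / (j : ℚ)) ^ 3
        - 2 / 3 * (∑ j ∈ Finset.Icc 1 m, (1 : ℚ) / (j : ℚ) ^ 3) : ℚ) : ZMod p)
      = -(4 / 3) * (∑ j ∈ Finset.Icc 1 m, ((j : ZMod p))⁻¹) ^ 3
          - (2 / 3) * ∑ j ∈ Finset.Icc 1 m, ((j : ZMod p)⁻¹) ^ 3 := by
    rw [PGood.castSub (PGood.mul hgood43.neg (hgH.pow 3)) (PGood.mul hgood23 hgH3),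
      PGood.castMul hgood43.neg (hgH.pow 3), PGood.castMul hgood23 hgH3,
      PGood.castPow hgH 3, hcH, hcH3]
    have c43 : (((4 : ℚ) / 3 : ℚ) : ZMod p) = (4 : ZMod p) / 3 := by
      rw [e43, (PGood.natDiv h3K).2]
      norm_num
    have c23 : (((2 : ℚ) / 3 : ℚ) : ZMod p) = (2 : ZMod p) / 3 := by
      rw [e23, (PGood.natDiv h3K).2]
      norm_num
    rw [Rat.cast_neg, c43, c23]
  rw [hcL, hcR, Ksum hm hp3]
  exact sub_self _
end

section
/- For every nonnegative integer n, the sum over k from 0 to n of binom(2k,k)^2 / ((2k-1) * 16^k) equals -(2n+1) * binom(2n,n)^2 / 16^n. -/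
open Finset

/-- For every nonnegative integer `n`,
`∑_{k=0}^n C(2k,k)^2 / ((2k-1) * 16^k) = -(2n+1) * C(2n,n)^2 / 16^n`. -/
theorem sun_identity_1 (n : ℕ) :
    (∑ k ∈ Finset.range (n + 1),
        ((2 * k).choose k : ℚ) ^ 2 / ((2 * (k : ℚ) - 1) * 16 ^ k))
      = -((2 * (n : ℚ) + 1) * ((2 * n).choose n : ℚ) ^ 2 / 16 ^ n) := by
  induction n with
  | zero => norm_num
  | succ n ih =>
    rw [Finset.sum_range_succ, ih]
    have key : ((n : ℚ) + 1) * ((2 * (n + 1)).choose (n + 1) : ℚ)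
        = 2 * (2 * n + 1) * ((2 * n).choose n : ℚ) := by
      have := Nat.succ_mul_centralBinom_succ n
      simp only [Nat.centralBinom] at this
      exact_mod_cast congrArg (Nat.cast : ℕ → ℚ) this
    have h1 : (2 * ((n : ℚ) + 1) - 1) ≠ 0 := by have : (0:ℚ) ≤ (n:ℚ) := n.cast_nonneg; intro h; nlinarith
    have h2 : ((16 : ℚ)) ^ (n + 1) ≠ 0 := by positivity
    have h3 : ((16 : ℚ)) ^ n ≠ 0 := by positivity
    have h4 : ((n : ℚ) + 1) ≠ 0 := by positivity
    have hc : ((2 * (n + 1)).choose (n + 1) : ℚ)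
        = 2 * (2 * n + 1) * ((2 * n).choose n : ℚ) / (n + 1) := by
      field_simp
      linarith [key]
    push_cast
    rw [hc]
    field_simp
    ring
end

section
/- For every nonnegative integer n, the sum over k from 0 to n of (1 - 4k) * binom(2k,k)^4 / ((2k-1)^4 * 256^k) equals (8n^2 + 4n + 1) * binom(2n,n)^4 / 256^n. -/
open Finset

lemma central_succ (n : ℕ) :
    (((2 * (n + 1)).choose (n + 1) : ℚ)) * (n + 1) = 2 * (2 * n + 1) * ((2 * n).choose n : ℚ) := by
  have h := Nat.succ_mul_centralBinom_succ n
  have : ((n + 1) * Nat.centralBinom (n + 1) : ℚ) = (2 * (2 * n + 1) * Nat.centralBinom n : ℚ) := by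
    exact_mod_cast congrArg (Nat.cast : ℕ → ℚ) h
  simp only [Nat.centralBinom] at this
  push_cast at this ⊢
  linarith

/-- For every nonnegative integer `n`,
`∑_{k=0}^n (1-4k) * C(2k,k)^4 / ((2k-1)^4 * 256^k)
  = (8n^2 + 4n + 1) * C(2n,n)^4 / 256^n`. -/
theorem sun_identity_2 (n : ℕ) :
    (∑ k ∈ Finset.range (n + 1),
        (1 - 4 * (k : ℚ)) * ((2 * k).choose k : ℚ) ^ 4 / ((2 * (k : ℚ) - 1) ^ 4 * 256 ^ k))
      = (8 * (n : ℚ) ^ 2 + 4 * (n : ℚ) + 1) * ((2 * n).choose n : ℚ) ^ 4 / 256 ^ n := by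
  induction n with
  | zero => norm_num
  | succ n ih =>
    rw [Finset.sum_range_succ, ih]
    have h := central_succ n
    have hn1 : ((n : ℚ) + 1) ≠ 0 := by positivity
    have hc : (((2 * (n + 1)).choose (n + 1)) : ℚ) = 2 * (2 * n + 1) * ((2 * n).choose n : ℚ) / (n + 1) := by
      field_simp
      linarith
    have hden : (2 * ((n : ℚ) + 1) - 1) ≠ 0 := by
      have : (2 * ((n : ℚ) + 1) - 1) = 2 * n + 1 := by ring
      rw [this]; positivity
    have h256 : (256 : ℚ) ^ n ≠ 0 := by positivity
    push_cast [hc]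
    have h2 : (2 * (n : ℚ) + 1) ≠ 0 := by positivity
    have e : (2 * ((n : ℚ) + 1) - 1) = 2 * n + 1 := by ring
    rw [e]
    field_simp
    ring
end
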